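/- arXiv:1010.2356 — 4 statements merged into one kernel-verified Lean document; each statement's English description precedes it below -/
import Mathlib

section
/- For every integer K ≥ 1 and every θ ∈ B(π) with θ ≠ 0, one has |∑_{x ∈ D_K} e^{i θ·x}| ≤ 4(K+1)‖θ‖_∞^{-1}. -/
open Filter MeasureTheory Real Finset
open scoped BigOperators

noncomputable section

/-- `T_k = (−k/2, k/2]² ∩ ℤ²`. -/
def Tset (k : ℝ) : Finset (ℤ × ℤ) :=
  Finset.Ioc ⌊-k / 2⌋ ⌊k / 2⌋ ×ˢ Finset.Ioc ⌊-k / 2⌋ ⌊k / 2⌋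

/-- `Λ_k = [−k/2, k/2]² ∩ ℤ²`. -/
def Lam (k : ℝ) : Finset (ℤ × ℤ) :=
  Finset.Icc ⌈-k / 2⌉ ⌊k / 2⌋ ×ˢ Finset.Icc ⌈-k / 2⌉ ⌊k / 2⌋

open scoped Classical in
/-- `D_k = {x ∈ ℤ² : |x| ≤ k/2}` (Euclidean norm). -/
def Dset (k : ℝ) : Finset (ℤ × ℤ) :=
  (Lam k).filter fun x => Real.sqrt ((x.1 : ℝ) ^ 2 + (x.2 : ℝ) ^ 2) ≤ k / 2

/-- sup (ℓ∞) norm on ℝ². -/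
def supNorm (θ : ℝ × ℝ) : ℝ := max |θ.1| |θ.2|

/-- the closed ℓ∞-ball `B(r)` in ℝ². -/
def Bset (r : ℝ) : Set (ℝ × ℝ) := {θ | supNorm θ ≤ r}

/-- squared Euclidean norm `|θ|²` on ℝ². -/
def sqNormR (θ : ℝ × ℝ) : ℝ := θ.1 ^ 2 + θ.2 ^ 2

/-- squared Euclidean norm `|y|²` of a lattice point. -/
def sqNorm (y : ℤ × ℤ) : ℝ := (y.1 : ℝ) ^ 2 + (y.2 : ℝ) ^ 2

/-- dot product `θ · x` of θ ∈ ℝ² and x ∈ ℤ². -/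
def dotP (θ : ℝ × ℝ) (x : ℤ × ℤ) : ℝ := θ.1 * x.1 + θ.2 * x.2

/-- `e^{iθ·x}`. -/
def cexp (θ : ℝ × ℝ) (x : ℤ × ℤ) : ℂ := Complex.exp (Complex.I * (dotP θ x : ℂ))

/-- `e^{2πi x·y/L}`. -/
def eL (L : ℕ) (x y : ℤ × ℤ) : ℂ :=
  Complex.exp (2 * (π : ℂ) * Complex.I * ((x.1 * y.1 + x.2 * y.2 : ℤ) : ℂ) / (L : ℂ))

/-- the filter of large even natural numbers. -/
def evenAtTop : Filter ℕ := Filter.atTop ⊓ Filter.principal {n | Even n}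

/-- the Fourier point `2πy/L ∈ ℝ²`. -/
def fourierTheta (L : ℕ) (y : ℤ × ℤ) : ℝ × ℝ := (2 * π * y.1 / L, 2 * π * y.2 / L)

/-- the characteristic function `φ(θ) = ∑_x e^{iθ·x} q(x)` of a jump distribution
supported in `Λ_m`; it is real-valued by symmetry, so we take the real part. -/
def phiOf (m : ℕ) (qq : ℤ × ℤ → ℝ) (θ : ℝ × ℝ) : ℝ :=
  (∑ x ∈ Lam m, cexp θ x * (qq x : ℂ)).re
lemma geom_bound (t : ℝ) (ht : |t| ≤ π) (ht0 : t ≠ 0) (p q : ℤ) :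
    ‖∑ n ∈ Finset.Icc p q, Complex.exp (Complex.I * (t * n))‖ ≤ π / |t| := by
  have htpos : 0 < |t| := abs_pos.mpr ht0
  have hπ : (0:ℝ) < π := Real.pi_pos
  set z : ℂ := Complex.exp (Complex.I * t) with hz
  have hterm : ∀ n : ℤ, Complex.exp (Complex.I * (t * n)) = z ^ n := by
    intro n
    rw [hz, ← Complex.exp_int_mul]
    ring_nf
  have hz0 : z ≠ 0 := Complex.exp_ne_zero _
  have hznorm : ‖z‖ = 1 := by
    rw [hz, Complex.norm_exp]
    simp
  have hz1 : z ≠ 1 := by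
    intro h
    rw [hz, Complex.exp_eq_one_iff] at h
    obtain ⟨n, hn⟩ := h
    have hc : (t:ℂ) = (n:ℂ) * (2*π) := by
      have h2 : Complex.I * (t:ℂ) = Complex.I * ((n:ℂ)*(2*π)) := by rw [hn]; ring
      exact mul_left_cancel₀ Complex.I_ne_zero h2
    have ht' : t = n * (2*π) := by exact_mod_cast hc
    have habs : |(n:ℝ)| * (2*π) ≤ π := by
      have h3 := ht
      rw [ht', abs_mul, abs_of_pos (by linarith : (0:ℝ) < 2*π)] at h3
      exact h3
    have hn0 : n = 0 := by
      by_contra h0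
      have h4 : (1:ℝ) ≤ |(n:ℝ)| := by
        have := Int.one_le_abs h0
        calc (1:ℝ) ≤ (|n| : ℤ) := by exact_mod_cast this
        _ = |(n:ℝ)| := by push_cast; ring
      nlinarith
    rw [hn0] at ht'; simp at ht'; exact ht0 ht'
  have hlow : 2 * |t| / π ≤ ‖z - 1‖ := by
    have hcos : Real.cos t ≤ 1 - 2/π^2 * t^2 := Real.cos_le_one_sub_mul_cos_sq ht
    have hnormsq : ‖z - 1‖^2 = 2 - 2 * Real.cos t := by
      have : z = Real.cos t + Real.sin t * Complex.I := by
        rw [hz, mul_comm, Complex.exp_mul_I]; norm_num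
      rw [this, ← Complex.normSq_eq_norm_sq]
      simp [Complex.normSq_apply, Complex.add_re, Complex.add_im, Complex.sub_re, Complex.sub_im,
        Complex.cos_ofReal_re, Complex.sin_ofReal_re]
      nlinarith [Real.sin_sq_add_cos_sq t]
    have h1 : (2*|t|/π)^2 ≤ ‖z-1‖^2 := by
      rw [hnormsq]
      have h7 : (2*|t|/π)^2 = 4*t^2/π^2 := by rw [div_pow, mul_pow, sq_abs]; norm_num
      rw [h7]
      have hp2 : (0:ℝ) < π^2 := by positivity
      rw [div_le_iff₀ hp2]
      have h5 := mul_le_mul_of_nonneg_left hcos (le_of_lt hp2)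
      have h6 : π^2 * (1 - 2/π^2 * t^2) = π^2 - 2*t^2 := by field_simp
      rw [h6] at h5
      linarith
    have := abs_le_of_sq_le_sq h1 (norm_nonneg _)
    have h8 : 0 ≤ 2*|t|/π := div_nonneg (by positivity) hπ.le
    calc 2*|t|/π = |2*|t|/π| := (abs_of_nonneg h8).symm
    _ ≤ ‖z-1‖ := this
  rcases lt_or_ge q p with h | h
  · rw [Finset.Icc_eq_empty (by exact_mod_cast not_le.mpr h)]
    simp; positivity
  · have hN : Finset.Icc p q = (Finset.range (q+1-p).toNat).map
        (Nat.castEmbedding.trans <| addLeftEmbedding p) := Int.Icc_eq_finset_map p q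
    simp only [hterm]
    rw [hN, Finset.sum_map]
    simp only [Function.Embedding.trans_apply, Nat.castEmbedding_apply, addLeftEmbedding_apply]
    have : ∀ k : ℕ, z ^ (p + (k:ℤ)) = z ^ p * z ^ k := by
      intro k; rw [zpow_add₀ hz0, zpow_natCast]
    simp only [this]
    rw [← Finset.mul_sum, geom_sum_eq hz1]
    rw [norm_mul]
    have hzp : ‖z ^ p‖ = 1 := by rw [norm_zpow, hznorm]; simp
    rw [hzp, one_mul, norm_div]
    have hnum : ‖z ^ (q+1-p).toNat - 1‖ ≤ 2 := by
      calc ‖z ^ (q+1-p).toNat - 1‖ ≤ ‖z ^ (q+1-p).toNat‖ + ‖(1:ℂ)‖ := norm_sub_le _ _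
      _ = 2 := by rw [norm_pow, hznorm]; norm_num
    have hden : (0:ℝ) < ‖z - 1‖ := by
      rw [norm_pos_iff]; exact sub_ne_zero.mpr hz1
    calc ‖z ^ (q+1-p).toNat - 1‖ / ‖z - 1‖ ≤ 2 / (2*|t|/π) :=
          div_le_div₀ (by norm_num) hnum (by positivity) hlow
    _ = π / |t| := by field_simp

open scoped Classical in
lemma key_bound (K : ℕ) (hK : 1 ≤ K) (θ : ℝ × ℝ)
    (hθB : supNorm θ ≤ π) (h1 : θ.1 ≠ 0) (h12 : |θ.2| ≤ |θ.1|) :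
    ‖∑ x ∈ Dset K, cexp θ x‖ ≤ 4 * (K + 1) * (supNorm θ)⁻¹ := by
  have hπ : (0:ℝ) < π := Real.pi_pos
  have hsup : supNorm θ = |θ.1| := max_eq_left h12
  have ht1 : |θ.1| ≤ π := by rw [← hsup]; exact hθB
  have ht1pos : 0 < |θ.1| := abs_pos.mpr h1
  set A : ℤ := ⌈(-(K:ℝ))/2⌉ with hA
  set B : ℤ := ⌊(K:ℝ)/2⌋ with hB
  have hABr : ∀ j : ℤ, j ∈ Finset.Icc A B → -(K:ℝ)/2 ≤ (j:ℝ) ∧ (j:ℝ) ≤ (K:ℝ)/2 := by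
    intro j hj
    rw [Finset.mem_Icc] at hj
    constructor
    · calc -(K:ℝ)/2 ≤ (A:ℝ) := by rw [hA]; exact_mod_cast Int.le_ceil _
      _ ≤ (j:ℝ) := by exact_mod_cast hj.1
    · calc (j:ℝ) ≤ (B:ℝ) := by exact_mod_cast hj.2
      _ ≤ (K:ℝ)/2 := by rw [hB]; exact_mod_cast Int.floor_le _
  -- decompose the sum into rows
  have hD : ∑ x ∈ Dset (K:ℝ), cexp θ x
      = ∑ j ∈ Finset.Icc A B, ∑ n ∈ (Finset.Icc A B).filter
          (fun n : ℤ => Real.sqrt ((n:ℝ)^2 + (j:ℝ)^2) ≤ (K:ℝ)/2), cexp θ (n, j) := by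
    rw [Dset, Lam, Finset.sum_filter, Finset.sum_product, Finset.sum_comm]
    refine Finset.sum_congr rfl fun j _ => ?_
    rw [Finset.sum_filter]
  rw [hD]
  -- bound each row
  have hrowbound : ∀ j ∈ Finset.Icc A B,
      ‖∑ n ∈ (Finset.Icc A B).filter
          (fun n : ℤ => Real.sqrt ((n:ℝ)^2 + (j:ℝ)^2) ≤ (K:ℝ)/2), cexp θ (n, j)‖ ≤ π / |θ.1| := by
    intro j hj
    obtain ⟨hj1, hj2⟩ := hABr j hj
    have hc : (0:ℝ) ≤ ((K:ℝ)/2)^2 - (j:ℝ)^2 := by nlinarith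
    set c : ℝ := ((K:ℝ)/2)^2 - (j:ℝ)^2 with hcdef
    set s : ℝ := Real.sqrt c with hs
    have hsK : s ≤ (K:ℝ)/2 := by
      rw [hs]
      calc Real.sqrt c ≤ Real.sqrt (((K:ℝ)/2)^2) := Real.sqrt_le_sqrt (by nlinarith)
      _ = (K:ℝ)/2 := Real.sqrt_sq (by positivity)
    have hrow : (Finset.Icc A B).filter
        (fun n : ℤ => Real.sqrt ((n:ℝ)^2 + (j:ℝ)^2) ≤ (K:ℝ)/2) = Finset.Icc ⌈-s⌉ ⌊s⌋ := by
      ext n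
      simp only [Finset.mem_filter, Finset.mem_Icc]
      have hsqrt : Real.sqrt ((n:ℝ)^2 + (j:ℝ)^2) ≤ (K:ℝ)/2 ↔ (n:ℝ)^2 ≤ c := by
        rw [Real.sqrt_le_left (by positivity), hcdef]
        constructor <;> intro h <;> linarith
      constructor
      · rintro ⟨-, h2⟩
        rw [hsqrt] at h2
        have h3 := (Real.sq_le hc).mp h2
        exact ⟨Int.ceil_le.mpr h3.1, Int.le_floor.mpr h3.2⟩
      · rintro ⟨h1', h2'⟩
        have h3 : -s ≤ (n:ℝ) := Int.ceil_le.mp h1'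
        have h4 : (n:ℝ) ≤ s := Int.le_floor.mp h2'
        have hn2 : (n:ℝ)^2 ≤ c := (Real.sq_le hc).mpr ⟨h3, h4⟩
        refine ⟨⟨Int.ceil_le.mpr ?_, Int.le_floor.mpr ?_⟩, hsqrt.mpr hn2⟩
        · calc (-(K:ℝ))/2 = -((K:ℝ)/2) := by ring
          _ ≤ -s := by linarith
          _ ≤ (n:ℝ) := h3
        · linarith
    rw [hrow]
    have hsplit : ∀ n : ℤ, cexp θ (n, j)
        = Complex.exp (Complex.I * (θ.2 * (j:ℝ) : ℝ)) * Complex.exp (Complex.I * ((θ.1 : ℝ) * (n:ℝ))) := by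
      intro n
      rw [cexp, dotP, ← Complex.exp_add]
      push_cast
      ring_nf
    simp only [hsplit]
    rw [← Finset.mul_sum, norm_mul]
    have : ‖Complex.exp (Complex.I * (θ.2 * (j:ℝ) : ℝ))‖ = 1 := by
      rw [Complex.norm_exp]
      simp
    rw [this, one_mul]
    exact geom_bound θ.1 ht1 h1 _ _
  -- sum up
  have hcard : ((Finset.Icc A B).card : ℝ) ≤ (K:ℝ) + 1 := by
    have hBK : (2*B : ℝ) ≤ (K:ℝ) := by
      have := Int.floor_le ((K:ℝ)/2)
      rw [← hB] at this
      push_cast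
      linarith
    have hB0 : 0 ≤ B := by
      rw [hB]
      exact Int.floor_nonneg.mpr (by positivity)
    have hAB : A = -B := by
      rw [hA, hB, neg_div, Int.ceil_neg]
    rw [Int.card_Icc, hAB]
    have h9 : ((B + 1 - -B).toNat : ℤ) = 2*B + 1 := by
      rw [Int.toNat_of_nonneg (by omega)]; ring
    have htn : (((B + 1 - -B).toNat : ℕ) : ℝ) = 2*(B:ℝ) + 1 := by exact_mod_cast h9
    rw [htn]
    linarith
  calc ‖∑ j ∈ Finset.Icc A B, ∑ n ∈ (Finset.Icc A B).filter
          (fun n : ℤ => Real.sqrt ((n:ℝ)^2 + (j:ℝ)^2) ≤ (K:ℝ)/2), cexp θ (n, j)‖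
      ≤ ∑ j ∈ Finset.Icc A B, ‖∑ n ∈ (Finset.Icc A B).filter
          (fun n : ℤ => Real.sqrt ((n:ℝ)^2 + (j:ℝ)^2) ≤ (K:ℝ)/2), cexp θ (n, j)‖ :=
        norm_sum_le _ _
    _ ≤ ∑ _j ∈ Finset.Icc A B, π / |θ.1| := Finset.sum_le_sum hrowbound
    _ = ((Finset.Icc A B).card : ℝ) * (π / |θ.1|) := by rw [Finset.sum_const, nsmul_eq_mul]
    _ ≤ ((K:ℝ) + 1) * (4 / |θ.1|) := by
        apply mul_le_mul hcard ?_ (by positivity) (by positivity)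
        gcongr
        exact Real.pi_le_four
    _ = 4 * ((K:ℝ) + 1) * (supNorm θ)⁻¹ := by rw [hsup]; field_simp

lemma dset_swap (k : ℝ) (x : ℤ × ℤ) : x ∈ Dset k ↔ (x.2, x.1) ∈ Dset k := by
  simp only [Dset, Finset.mem_filter, Lam, Finset.mem_product]
  rw [add_comm ((x.1:ℝ)^2)]
  tauto

lemma cexp_swap (θ : ℝ × ℝ) (x : ℤ × ℤ) : cexp θ x = cexp (θ.2, θ.1) (x.2, x.1) := by
  rw [cexp, cexp, dotP, dotP]
  push_cast
  ring_nf

/-- For every integer `K ≥ 1` and every `θ ∈ B(π)` with `θ ≠ 0`,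
`|∑_{x ∈ D_K} e^{iθ·x}| ≤ 4(K+1)‖θ‖_∞⁻¹`. -/
theorem sum_exp_Dset_bound (K : ℕ) (hK : 1 ≤ K) (θ : ℝ × ℝ)
    (hθB : supNorm θ ≤ π) (hθ : θ ≠ 0) :
    ‖∑ x ∈ Dset K, cexp θ x‖ ≤ 4 * (K + 1) * (supNorm θ)⁻¹ := by
  rcases le_total |θ.2| |θ.1| with h | h
  · have h1 : θ.1 ≠ 0 := by
      intro h0
      apply hθ
      have h2' : |θ.2| ≤ 0 := by simpa [h0] using h
      have h2 : θ.2 = 0 := abs_eq_zero.mp (le_antisymm h2' (abs_nonneg _))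
      exact Prod.ext h0 h2
    exact key_bound K hK θ hθB h1 h
  · set θ' : ℝ × ℝ := (θ.2, θ.1) with hθ'def
    have hsup' : supNorm θ' = supNorm θ := max_comm _ _
    have h1' : θ'.1 ≠ 0 := by
      intro h0
      apply hθ
      have h0' : θ.2 = 0 := h0
      have h2' : |θ.1| ≤ 0 := by simpa [h0'] using h
      have h2 : θ.1 = 0 := abs_eq_zero.mp (le_antisymm h2' (abs_nonneg _))
      exact Prod.ext h2 h0'
    have hsum : ∑ x ∈ Dset K, cexp θ x = ∑ x ∈ Dset K, cexp θ' x := by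
      refine Finset.sum_equiv (Equiv.prodComm ℤ ℤ) ?_ ?_
      · intro x
        exact dset_swap K x
      · intro x hx
        exact cexp_swap θ x
    rw [hsum, ← hsup']
    exact key_bound K hK θ' (by rw [hsup']; exact hθB) h1' h
end
end

section
/- Let f be a positive continuous function on B(1/2) = {x ∈ ℝ² : ‖x‖_∞ ≤ 1/2} with f(x₁,x₂) = f(x₂,x₁) = f(−x₁,x₂), and for each even positive integer M let q_M(x) = c_M f(x/M) u_M(x) with c_M > 0 chosen so that ∑_x q_M(x) = 1, and let φ_M(θ) = ∑_{x ∈ ℤ²} e^{iθ·x} q_M(x). Set c₀ = 1/∫_{B(1/2)} f(x) dx and σ² = c₀ ∫_{B(1/2)} x₁² f(x) dx. Then for every ε > 0 there exist δ > 0 and M₀ such that for all even M ≥ M₀ and all θ ∈ B(δ/M) with θ ≠ 0, the ratio (1 − φ_M(θ)) / (σ² M² |θ|² / 2) lies in the interval (1−ε, 1+ε). -/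
open Filter MeasureTheory Real Finset
open scoped BigOperators

noncomputable section

/-- Condition (P0): `q` is a symmetric probability distribution supported in
`Λ'_m = Λ_m \ {0}`, with values in [0,1] and equal, positive coordinate variances. -/
def CondP0 (m : ℕ) (qq : ℤ × ℤ → ℝ) : Prop :=
  (∀ x, 0 ≤ qq x ∧ qq x ≤ 1) ∧
  (∀ x, x ∉ (Lam m).erase 0 → qq x = 0) ∧
  (∑ x ∈ (Lam m).erase 0, qq x = 1) ∧
  (∀ x, qq (-x) = qq x) ∧
  (∑ x ∈ Lam m, (x.1 : ℝ) ^ 2 * qq x = ∑ x ∈ Lam m, (x.2 : ℝ) ^ 2 * qq x) ∧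
  (0 < ∑ x ∈ Lam m, (x.1 : ℝ) ^ 2 * qq x)

/-- Condition (P1) with constant `σ² = σ2`. -/
def CondP1 (M : ℕ → ℕ) (q : ℕ → ℤ × ℤ → ℝ) (σ2 : ℝ) : Prop :=
  ∀ ε > (0 : ℝ), ∃ δ > (0 : ℝ), ∀ᶠ L in evenAtTop, ∀ θ : ℝ × ℝ, θ ≠ 0 →
    supNorm θ ≤ δ / M L →
    (1 - phiOf (M L) (q L) θ) / (σ2 * (M L : ℝ) ^ 2 * sqNormR θ / 2)
      ∈ Set.Ioo (1 - ε) (1 + ε)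

/-- Condition (P2). -/
def CondP2 (M : ℕ → ℕ) (q : ℕ → ℤ × ℤ → ℝ) : Prop :=
  ∀ δ > (0 : ℝ), ∃ δ' > (0 : ℝ), ∃ ζ > (0 : ℝ), ∀ᶠ L in evenAtTop, ∀ θ : ℝ × ℝ,
    supNorm θ ≤ δ' → ¬ supNorm θ ≤ δ / M L → 1 - phiOf (M L) (q L) θ > ζ

/-- Condition (P3). -/
def CondP3 (M : ℕ → ℕ) (q : ℕ → ℤ × ℤ → ℝ) : Prop :=
  ∀ ε > (0 : ℝ), ∀ a > (0 : ℝ), ∀ᶠ L in evenAtTop, ∀ θ : ℝ × ℝ,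
    supNorm θ ≤ π → ¬ supNorm θ ≤ a → |phiOf (M L) (q L) θ| < ε

/-- `G_L(x,λ) = L⁻² ∑_{y ∈ T_L} e^{2πi x·y/L} / (1 + λ − φ_{M_L}(2πy/L))`. -/
def Gfun (M : ℕ → ℕ) (q : ℕ → ℤ × ℤ → ℝ) (L : ℕ) (x : ℤ × ℤ) (lam : ℝ) : ℂ :=
  ((L : ℂ) ^ 2)⁻¹ * ∑ y ∈ Tset L,
    eL L x y / ((1 + lam - phiOf (M L) (q L) (fourierTheta L y) : ℝ) : ℂ)

open scoped Classical in
/-- the annulus `A_L(α, v)`. -/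
def Aset (L : ℕ) (α v : ℝ) : Finset (ℤ × ℤ) :=
  if α = 0 then (Tset v).erase 0
  else if α = 1 then Tset L \ Tset (L / v)
  else Tset ((L : ℝ) ^ α * v) \ Tset ((L : ℝ) ^ α / v)

/-- the uniform distribution `u_m` on `Λ'_m = Λ_m \ {0}`. -/
def uunif (m : ℕ) (x : ℤ × ℤ) : ℝ :=
  if x ∈ (Lam m).erase 0 then (((Lam m).erase 0).card : ℝ)⁻¹ else 0

/-- `q_M(x) = c_M f(x/M) u_M(x)`. -/
def qMf (f : ℝ × ℝ → ℝ) (c : ℕ → ℝ) (m : ℕ) (x : ℤ × ℤ) : ℝ :=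
  c m * f ((x.1 : ℝ) / m, (x.2 : ℝ) / m) * uunif m x

open scoped Topology

namespace P1aux


def U : Set (ℝ × ℝ) := (Set.Ioc (-(1/2:ℝ)) (1/2)) ×ˢ (Set.Ioc (-(1/2:ℝ)) (1/2))

lemma Bset_eq : Bset (1/2) = (Set.Icc (-(1/2:ℝ)) (1/2)) ×ˢ (Set.Icc (-(1/2:ℝ)) (1/2)) := by
  ext ⟨a, b⟩
  simp only [Bset, supNorm, Set.mem_setOf_eq, max_le_iff, Set.mem_prod, Set.mem_Icc, abs_le]

lemma measurableSet_K : MeasurableSet (Bset (1/2)) := by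
  rw [Bset_eq]; exact (measurableSet_Icc.prod measurableSet_Icc)

lemma U_subset_K : U ⊆ Bset (1/2) := by
  rw [Bset_eq]
  exact Set.prod_mono Set.Ioc_subset_Icc_self Set.Ioc_subset_Icc_self

lemma volume_K : volume (Bset (1/2)) = 1 := by
  rw [Bset_eq, Measure.volume_eq_prod, Measure.prod_prod]
  simp [Real.volume_Icc]
  norm_num

lemma K_ae_U : (Bset (1/2) : Set (ℝ × ℝ)) =ᵐ[volume] U := by
  rw [Filter.eventuallyEq_set]
  have h1 : volume ({p : ℝ × ℝ | p.1 = -(1/2)} ∪ {p : ℝ × ℝ | p.2 = -(1/2)}) = 0 := by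
    apply measure_union_null
    · have : {p : ℝ × ℝ | p.1 = -(1/2)} = ({-(1/2)} : Set ℝ) ×ˢ (Set.univ : Set ℝ) := by
        ext ⟨a, b⟩; simp [eq_comm]
      rw [this, Measure.volume_eq_prod, Measure.prod_prod]; simp
    · have : {p : ℝ × ℝ | p.2 = -(1/2)} = (Set.univ : Set ℝ) ×ˢ ({-(1/2)} : Set ℝ) := by
        ext ⟨a, b⟩; simp [eq_comm]
      rw [this, Measure.volume_eq_prod, Measure.prod_prod]; simp
  refine (Filter.eventually_of_mem (compl_mem_ae_iff.mpr h1) ?_)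
  rintro ⟨a, b⟩ hp
  simp only [Set.mem_compl_iff, Set.mem_union, Set.mem_setOf_eq, not_or] at hp
  rw [Bset_eq]
  simp only [Set.mem_prod, Set.mem_Icc, Set.mem_Ioc, U]
  constructor
  · rintro ⟨⟨h1, h2⟩, h3, h4⟩
    exact ⟨⟨lt_of_le_of_ne h1 (Ne.symm hp.1), h2⟩, ⟨lt_of_le_of_ne h3 (Ne.symm hp.2), h4⟩⟩
  · rintro ⟨⟨h1, h2⟩, h3, h4⟩
    exact ⟨⟨h1.le, h2⟩, ⟨h3.le, h4⟩⟩

lemma Lam_two_mul (k : ℕ) :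
    Lam (2 * k : ℕ) = Finset.Icc (-(k:ℤ)) k ×ˢ Finset.Icc (-(k:ℤ)) k := by
  have h1 : (-((2*k : ℕ):ℝ)) / 2 = ((-(k:ℤ) : ℤ) : ℝ) := by push_cast; ring
  have h2 : (((2*k : ℕ):ℝ)) / 2 = ((k : ℤ) : ℝ) := by push_cast; ring
  rw [Lam, h1, h2, Int.ceil_intCast, Int.floor_intCast]

def G (k : ℕ) : Finset (ℤ × ℤ) := Finset.Ioc (-(k:ℤ)) k ×ˢ Finset.Ioc (-(k:ℤ)) k

lemma G_subset_Lam (k : ℕ) : G k ⊆ Lam (2 * k : ℕ) := by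
  rw [Lam_two_mul]
  exact Finset.product_subset_product Finset.Ioc_subset_Icc_self Finset.Ioc_subset_Icc_self

def cell (m : ℕ) (x : ℤ × ℤ) : Set (ℝ × ℝ) :=
  (Set.Ioc (((x.1:ℝ) - 1)/m) ((x.1:ℝ)/m)) ×ˢ (Set.Ioc (((x.2:ℝ) - 1)/m) ((x.2:ℝ)/m))

lemma mem_Ioc_iff_ceil {m : ℕ} (hm : 0 < m) {z : ℤ} {t : ℝ} :
    t ∈ Set.Ioc (((z:ℝ) - 1)/m) ((z:ℝ)/m) ↔ ⌈(m:ℝ) * t⌉ = z := by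
  have hm' : (0:ℝ) < m := by positivity
  rw [Set.mem_Ioc, Int.ceil_eq_iff, div_lt_iff₀ hm', le_div_iff₀ hm', mul_comm]

lemma mem_cell_iff {m : ℕ} (hm : 0 < m) {x : ℤ × ℤ} {y : ℝ × ℝ} :
    y ∈ cell m x ↔ ⌈(m:ℝ) * y.1⌉ = x.1 ∧ ⌈(m:ℝ) * y.2⌉ = x.2 := by
  rw [cell, Set.mem_prod, mem_Ioc_iff_ceil hm, mem_Ioc_iff_ceil hm]

lemma measurableSet_cell (m : ℕ) (x : ℤ × ℤ) : MeasurableSet (cell m x) :=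
  measurableSet_Ioc.prod measurableSet_Ioc

lemma volume_cell {m : ℕ} (hm : 0 < m) (x : ℤ × ℤ) :
    volume (cell m x) = ENNReal.ofReal (((m:ℝ)^2)⁻¹) := by
  have hm' : (0:ℝ) < m := by positivity
  rw [cell, Measure.volume_eq_prod, Measure.prod_prod, Real.volume_Ioc, Real.volume_Ioc]
  have h : ∀ z : ℝ, z/m - (z - 1)/m = (m:ℝ)⁻¹ := by
    intro z; field_simp; ring
  rw [h, h, ← ENNReal.ofReal_mul (by positivity)]
  congr 1
  rw [sq]
  rw [mul_inv]

lemma cell_subset_U {k : ℕ} (hk : 0 < k) {x : ℤ × ℤ} (hx : x ∈ G k) :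
    cell (2*k) x ⊆ U := by
  have hk' : (0:ℝ) < 2*k := by positivity
  simp only [G, Finset.mem_product, Finset.mem_Ioc] at hx
  rintro ⟨a, b⟩ ⟨⟨ha1, ha2⟩, hb1, hb2⟩
  have hcast : ((2*k : ℕ) : ℝ) = 2*(k:ℝ) := by push_cast; ring
  rw [hcast] at ha1 ha2 hb1 hb2
  constructor
  · constructor
    · have : ((x.1 : ℝ) - 1)/(2*k) ≥ -(1/2) := by
        rw [ge_iff_le, le_div_iff₀ (by positivity)]
        have : (-(k:ℤ) : ℝ) ≤ (x.1 : ℝ) - 1 := by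
          have := hx.1.1
          push_cast
          exact_mod_cast by
            have : -(k:ℤ) + 1 ≤ x.1 := hx.1.1
            linarith [this]
        push_cast at this ⊢
        nlinarith
      linarith
    · calc a ≤ (x.1:ℝ)/(2*k) := ha2
        _ ≤ 1/2 := by
          rw [div_le_iff₀ (by positivity)]
          have : (x.1 : ℝ) ≤ k := by exact_mod_cast hx.1.2
          nlinarith
  · constructor
    · have : ((x.2 : ℝ) - 1)/(2*k) ≥ -(1/2) := by
        rw [ge_iff_le, le_div_iff₀ (by positivity)]
        have : -(k:ℤ) + 1 ≤ x.2 := hx.2.1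
        have h2 : (-(k:ℝ)) + 1 ≤ (x.2:ℝ) := by exact_mod_cast this
        nlinarith
      linarith
    · calc b ≤ (x.2:ℝ)/(2*k) := hb2
        _ ≤ 1/2 := by
          rw [div_le_iff₀ (by positivity)]
          have : (x.2 : ℝ) ≤ k := by exact_mod_cast hx.2.2
          nlinarith



def stepf (g : ℝ × ℝ → ℝ) (k : ℕ) : ℝ × ℝ → ℝ :=
  fun y => ∑ x ∈ G k,
    (cell (2*k) x).indicator
      (fun _ => g ((x.1:ℝ)/((2*k:ℕ):ℝ), (x.2:ℝ)/((2*k:ℕ):ℝ))) y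

lemma div2k_mem {k : ℕ} (hk : 0 < k) {z : ℤ} (hz : z ∈ Finset.Icc (-(k:ℤ)) k) :
    (z:ℝ)/((2*k:ℕ):ℝ) ∈ Set.Icc (-(1/2):ℝ) (1/2) := by
  simp only [Finset.mem_Icc] at hz
  have h1 : (-(k:ℝ)) ≤ (z:ℝ) := by exact_mod_cast hz.1
  have h2 : (z:ℝ) ≤ k := by exact_mod_cast hz.2
  have hm : (0:ℝ) < ((2*k:ℕ):ℝ) := by positivity
  have hc : ((2*k:ℕ):ℝ) = 2*(k:ℝ) := by push_cast; ring
  constructor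
  · rw [le_div_iff₀ hm, hc]; nlinarith
  · rw [div_le_iff₀ hm, hc]; nlinarith

lemma lattice_mem_K {k : ℕ} (hk : 0 < k) {x : ℤ × ℤ} (hx : x ∈ Lam (2*k:ℕ)) :
    ((x.1:ℝ)/((2*k:ℕ):ℝ), (x.2:ℝ)/((2*k:ℕ):ℝ)) ∈ Bset (1/2) := by
  rw [Lam_two_mul] at hx
  rw [Bset_eq]
  simp only [Finset.mem_product] at hx
  exact ⟨div2k_mem hk hx.1, div2k_mem hk hx.2⟩

lemma integrable_stepf (g : ℝ × ℝ → ℝ) (k : ℕ) :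
    Integrable (stepf g k) (volume.restrict U) := by
  apply MeasureTheory.integrable_finset_sum
  intro x hx
  apply Integrable.restrict
  rw [integrable_indicator_iff (measurableSet_cell _ _)]
  refine ((integrableOn_const_iff).mpr (Or.inr ?_))
  rcases Nat.eq_zero_or_pos k with h | h
  · subst h; simp [G] at hx
  · rw [volume_cell (by positivity)]; exact ENNReal.ofReal_lt_top

lemma integral_stepf (g : ℝ × ℝ → ℝ) {k : ℕ} (hk : 0 < k) :
    ∫ y in U, stepf g k y =
      (((2*k:ℕ):ℝ)^2)⁻¹ *
        ∑ x ∈ G k, g ((x.1:ℝ)/((2*k:ℕ):ℝ), (x.2:ℝ)/((2*k:ℕ):ℝ)) := by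
  have hm : 0 < 2*k := by positivity
  simp only [stepf]
  rw [MeasureTheory.integral_finset_sum _ (fun x hx => by
    have := integrable_stepf g k
    apply Integrable.restrict
    rw [integrable_indicator_iff (measurableSet_cell _ _)]
    refine ((integrableOn_const_iff).mpr (Or.inr ?_))
    rw [volume_cell hm]; exact ENNReal.ofReal_lt_top)]
  rw [Finset.mul_sum]
  refine Finset.sum_congr rfl (fun x hx => ?_)
  rw [setIntegral_indicator (measurableSet_cell _ _),
    Set.inter_eq_self_of_subset_right (cell_subset_U hk hx), setIntegral_const,
    measureReal_def, volume_cell hm, ENNReal.toReal_ofReal (by positivity), smul_eq_mul]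

lemma ceil_mem_Ioc {k : ℕ} (hk : 0 < k) {t : ℝ} (ht : t ∈ Set.Ioc (-(1/2):ℝ) (1/2)) :
    ⌈((2*k:ℕ):ℝ)*t⌉ ∈ Finset.Ioc (-(k:ℤ)) k := by
  have hc : ((2*k:ℕ):ℝ) = 2*(k:ℝ) := by push_cast; ring
  rw [Finset.mem_Ioc]
  have hk' : (0:ℝ) < (k:ℝ) := by exact_mod_cast hk
  constructor
  · rw [Int.lt_ceil]
    push_cast
    nlinarith [ht.1, mul_pos hk' (show (0:ℝ) < t + 1/2 by linarith [ht.1])]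
  · rw [Int.ceil_le]
    push_cast
    nlinarith [ht.2, mul_nonneg hk'.le (show (0:ℝ) ≤ 1/2 - t by linarith [ht.2])]

lemma stepf_eq {g : ℝ × ℝ → ℝ} {k : ℕ} (hk : 0 < k) {y : ℝ × ℝ} (hy : y ∈ U) :
    stepf g k y = g ((⌈((2*k:ℕ):ℝ)*y.1⌉ : ℝ)/((2*k:ℕ):ℝ),
      (⌈((2*k:ℕ):ℝ)*y.2⌉ : ℝ)/((2*k:ℕ):ℝ)) := by
  have hm : 0 < 2*k := by positivity
  set x₀ : ℤ × ℤ := (⌈((2*k:ℕ):ℝ)*y.1⌉, ⌈((2*k:ℕ):ℝ)*y.2⌉) with hx₀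
  have hx₀G : x₀ ∈ G k := by
    simp only [G, Finset.mem_product]
    exact ⟨ceil_mem_Ioc hk hy.1, ceil_mem_Ioc hk hy.2⟩
  have hy₀ : y ∈ cell (2*k) x₀ := by
    rw [mem_cell_iff hm]
    exact ⟨rfl, rfl⟩
  rw [stepf, Finset.sum_eq_single_of_mem x₀ hx₀G]
  · rw [Set.indicator_of_mem hy₀]
  · intro x hx hne
    rw [Set.indicator_of_notMem]
    intro hyc
    rw [mem_cell_iff hm] at hyc
    exact hne (Prod.ext hyc.1 hyc.2).symm

lemma tendsto_ceil_div (t : ℝ) :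
    Tendsto (fun k : ℕ => (⌈((2*k:ℕ):ℝ)*t⌉ : ℝ)/((2*k:ℕ):ℝ)) atTop (𝓝 t) := by
  rw [← tendsto_sub_nhds_zero_iff]
  apply squeeze_zero_norm' (a := fun k : ℕ => (((2*k:ℕ):ℝ))⁻¹)
  · filter_upwards [Filter.eventually_ge_atTop 1] with k hk
    have hm : (0:ℝ) < ((2*k:ℕ):ℝ) := by
      have : (1:ℕ) ≤ k := hk
      positivity
    set a := ((2*k:ℕ):ℝ)*t with ha
    have e : (⌈a⌉:ℝ)/((2*k:ℕ):ℝ) - t = ((⌈a⌉:ℝ) - a)/((2*k:ℕ):ℝ) := by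
      field_simp [ha]; rw [ha]
    have h1 : (0:ℝ) ≤ (⌈a⌉:ℝ) - a := by linarith [Int.le_ceil a]
    have h2 : (⌈a⌉:ℝ) - a ≤ 1 := by linarith [Int.ceil_lt_add_one a]
    rw [Real.norm_eq_abs, e, abs_of_nonneg (by positivity), inv_eq_one_div]
    gcongr
  · have h2 : Tendsto (fun k : ℕ => ((2*k:ℕ):ℝ)) atTop atTop := by
      apply tendsto_natCast_atTop_atTop.comp
      exact Filter.tendsto_atTop_atTop_of_monotone (fun a b hab => by omega)
        (fun b => ⟨b, by omega⟩)
    exact h2.inv_tendsto_atTop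



lemma K_compact : IsCompact (Bset (1/2)) := by
  rw [Bset_eq]; exact isCompact_Icc.prod isCompact_Icc

lemma measurableSet_U : MeasurableSet U := measurableSet_Ioc.prod measurableSet_Ioc

lemma volume_U_lt_top : volume U < ⊤ := by
  rw [U, Measure.volume_eq_prod, Measure.prod_prod, Real.volume_Ioc]
  exact ENNReal.mul_lt_top ENNReal.ofReal_lt_top ENNReal.ofReal_lt_top

lemma stepf_measurable (g : ℝ × ℝ → ℝ) (k : ℕ) : Measurable (stepf g k) := by
  apply Finset.measurable_sum
  intro x _
  exact measurable_const.indicator (measurableSet_cell _ _)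

lemma ceil_pt_mem_K {k : ℕ} (hk : 0 < k) {y : ℝ × ℝ} (hy : y ∈ U) :
    ((⌈((2*k:ℕ):ℝ)*y.1⌉ : ℝ)/((2*k:ℕ):ℝ), (⌈((2*k:ℕ):ℝ)*y.2⌉ : ℝ)/((2*k:ℕ):ℝ))
      ∈ Bset (1/2) := by
  rw [Bset_eq]
  exact ⟨div2k_mem hk (Finset.Ioc_subset_Icc_self (ceil_mem_Ioc hk hy.1)),
    div2k_mem hk (Finset.Ioc_subset_Icc_self (ceil_mem_Ioc hk hy.2))⟩

lemma tendsto_integral_stepf (g : ℝ × ℝ → ℝ) (hg : ContinuousOn g (Bset (1/2))) :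
    Tendsto (fun k : ℕ => ∫ y in U, stepf g k y) atTop
      (𝓝 (∫ y in Bset (1/2), g y)) := by
  obtain ⟨C, hC⟩ := K_compact.exists_bound_of_continuousOn hg
  have h00 : ((0:ℝ), (0:ℝ)) ∈ Bset (1/2) := by
    rw [Bset_eq]
    exact ⟨⟨by norm_num, by norm_num⟩, ⟨by norm_num, by norm_num⟩⟩
  have hC0 : 0 ≤ C := le_trans (norm_nonneg _) (hC _ h00)
  have hint : ∫ y in Bset (1/2), g y = ∫ y in U, g y := setIntegral_congr_set K_ae_U
  rw [hint]
  apply tendsto_integral_of_dominated_convergence (bound := fun _ => C)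
  · exact fun k => ((stepf_measurable g k).stronglyMeasurable).aestronglyMeasurable
  · rw [integrable_const_iff]
    right
    rw [isFiniteMeasure_restrict]
    exact volume_U_lt_top.ne
  · intro k
    rw [ae_restrict_iff' measurableSet_U]
    refine ae_of_all _ (fun y hy => ?_)
    rcases Nat.eq_zero_or_pos k with h | h
    · subst h
      have hG0 : (G 0) = ∅ := by simp [G]
      simp only [stepf, hG0, Finset.sum_empty]
      simpa using hC0
    · rw [stepf_eq h hy, Real.norm_eq_abs, ← Real.norm_eq_abs]
      exact hC _ (ceil_pt_mem_K h hy)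
  · rw [ae_restrict_iff' measurableSet_U]
    refine ae_of_all _ (fun y hy => ?_)
    have hcw : ContinuousWithinAt g (Bset (1/2)) y := hg y (U_subset_K hy)
    have h1 : Tendsto (fun k : ℕ =>
        ((⌈((2*k:ℕ):ℝ)*y.1⌉ : ℝ)/((2*k:ℕ):ℝ), (⌈((2*k:ℕ):ℝ)*y.2⌉ : ℝ)/((2*k:ℕ):ℝ)))
        atTop (𝓝[Bset (1/2)] y) := by
      rw [tendsto_nhdsWithin_iff]
      constructor
      · have := (tendsto_ceil_div y.1).prodMk_nhds (tendsto_ceil_div y.2)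
        simpa using this
      · filter_upwards [Filter.eventually_ge_atTop 1] with k hk
        exact ceil_pt_mem_K hk hy
    have h2 := hcw.tendsto.comp h1
    apply h2.congr'
    filter_upwards [Filter.eventually_ge_atTop 1] with k hk
    exact (stepf_eq hk hy).symm

lemma card_sdiff_LG (k : ℕ) : (Lam (2*k:ℕ) \ G k).card = 4*k+1 := by
  rw [Finset.card_sdiff_of_subset (G_subset_Lam k), Lam_two_mul, G, Finset.card_product,
    Finset.card_product, Int.card_Icc, Int.card_Ioc]
  have h1 : ((k:ℤ) + 1 - -(k:ℤ)).toNat = 2*k+1 := by omega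
  have h2 : ((k:ℤ) - -(k:ℤ)).toNat = 2*k := by omega
  rw [h1, h2]
  ring_nf
  omega

lemma tendsto_riemann (g : ℝ × ℝ → ℝ) (hg : ContinuousOn g (Bset (1/2))) :
    Tendsto (fun k : ℕ => (((2*k:ℕ):ℝ)^2)⁻¹ *
        ∑ x ∈ Lam (2*k:ℕ), g ((x.1:ℝ)/((2*k:ℕ):ℝ), (x.2:ℝ)/((2*k:ℕ):ℝ)))
      atTop (𝓝 (∫ y in Bset (1/2), g y)) := by
  obtain ⟨C, hC⟩ := K_compact.exists_bound_of_continuousOn hg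
  have h00 : ((0:ℝ), (0:ℝ)) ∈ Bset (1/2) := by
    rw [Bset_eq]
    exact ⟨⟨by norm_num, by norm_num⟩, ⟨by norm_num, by norm_num⟩⟩
  have hC0 : 0 ≤ C := le_trans (norm_nonneg _) (hC _ h00)
  have hGlim : Tendsto (fun k : ℕ => (((2*k:ℕ):ℝ)^2)⁻¹ *
      ∑ x ∈ G k, g ((x.1:ℝ)/((2*k:ℕ):ℝ), (x.2:ℝ)/((2*k:ℕ):ℝ)))
      atTop (𝓝 (∫ y in Bset (1/2), g y)) := by
    apply (tendsto_integral_stepf g hg).congr'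
    filter_upwards [Filter.eventually_ge_atTop 1] with k hk
    exact integral_stepf g hk
  have hDlim : Tendsto (fun k : ℕ => (((2*k:ℕ):ℝ)^2)⁻¹ *
      ∑ x ∈ Lam (2*k:ℕ) \ G k, g ((x.1:ℝ)/((2*k:ℕ):ℝ), (x.2:ℝ)/((2*k:ℕ):ℝ)))
      atTop (𝓝 0) := by
    apply squeeze_zero_norm' (a := fun k : ℕ => 5*C*(k:ℝ)⁻¹)
    · filter_upwards [Filter.eventually_ge_atTop 1] with k hk
      have hk' : (1:ℝ) ≤ (k:ℝ) := by exact_mod_cast hk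
      have hkpos : 0 < k := hk
      have hS : |∑ x ∈ Lam (2*k:ℕ) \ G k,
          g ((x.1:ℝ)/((2*k:ℕ):ℝ), (x.2:ℝ)/((2*k:ℕ):ℝ))| ≤ ((4*k+1 : ℕ):ℝ) * C := by
        calc |∑ x ∈ Lam (2*k:ℕ) \ G k, g ((x.1:ℝ)/((2*k:ℕ):ℝ), (x.2:ℝ)/((2*k:ℕ):ℝ))|
            ≤ ∑ x ∈ Lam (2*k:ℕ) \ G k,
              |g ((x.1:ℝ)/((2*k:ℕ):ℝ), (x.2:ℝ)/((2*k:ℕ):ℝ))| :=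
            Finset.abs_sum_le_sum_abs _ _
          _ ≤ (Lam (2*k:ℕ) \ G k).card • C := by
            apply Finset.sum_le_card_nsmul
            intro x hx
            rw [← Real.norm_eq_abs]
            exact hC _ (lattice_mem_K hkpos (Finset.mem_sdiff.mp hx).1)
          _ = ((4*k+1 : ℕ):ℝ) * C := by rw [card_sdiff_LG, nsmul_eq_mul]
      rw [Real.norm_eq_abs, abs_mul, abs_of_nonneg (by positivity : (0:ℝ) ≤ (((2*k:ℕ):ℝ)^2)⁻¹)]
      have hsq : (((2*k:ℕ):ℝ)^2) = 4*(k:ℝ)^2 := by push_cast; ring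
      calc (((2*k:ℕ):ℝ)^2)⁻¹ * |_| ≤ (((2*k:ℕ):ℝ)^2)⁻¹ * (((4*k+1 : ℕ):ℝ) * C) := by
            apply mul_le_mul_of_nonneg_left hS (by positivity)
        _ ≤ 5*C*(k:ℝ)⁻¹ := by
            rw [hsq, inv_mul_le_iff₀ (by positivity)]
            have e1 : 4*(k:ℝ)^2*(5*C*(k:ℝ)⁻¹) = 20*C*(k:ℝ) := by
              field_simp
              ring
            rw [e1]
            push_cast
            nlinarith
    · have h2 : Tendsto (fun k : ℕ => ((k:ℕ):ℝ)) atTop atTop := tendsto_natCast_atTop_atTop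
      have := h2.inv_tendsto_atTop
      have h3 := this.const_mul (5*C)
      simpa using h3
  have := hDlim.add hGlim
  rw [zero_add] at this
  apply this.congr
  intro k
  rw [← mul_add, Finset.sum_sdiff (G_subset_Lam k)]


lemma integral_pos_of_pos {f : ℝ × ℝ → ℝ} (hc : ContinuousOn f (Bset (1/2)))
    (hp : ∀ x ∈ Bset (1/2), 0 < f x) : 0 < ∫ x in Bset (1/2), f x := by
  have h00 : ((0:ℝ), (0:ℝ)) ∈ Bset (1/2) := by
    rw [Bset_eq]
    exact ⟨⟨by norm_num, by norm_num⟩, ⟨by norm_num, by norm_num⟩⟩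
  obtain ⟨z, hzK, hz⟩ := K_compact.exists_isMinOn ⟨_, h00⟩ hc
  have hzpos : 0 < f z := hp z hzK
  have hle : f z * (volume (Bset (1/2))).toReal ≤ ∫ x in Bset (1/2), f x := by
    apply setIntegral_ge_of_const_le_real measurableSet_K
    · rw [volume_K]; exact ENNReal.one_ne_top
    · exact fun x hx => hz hx
    · exact hc.integrableOn_compact K_compact
  rw [volume_K] at hle
  simpa using lt_of_lt_of_le hzpos (by simpa using hle)

lemma integral_x1sq_pos {f : ℝ × ℝ → ℝ} (hc : ContinuousOn f (Bset (1/2)))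
    (hp : ∀ x ∈ Bset (1/2), 0 < f x) :
    0 < ∫ x in Bset (1/2), x.1 ^ 2 * f x := by
  have h00 : ((0:ℝ), (0:ℝ)) ∈ Bset (1/2) := by
    rw [Bset_eq]
    exact ⟨⟨by norm_num, by norm_num⟩, ⟨by norm_num, by norm_num⟩⟩
  obtain ⟨z, hzK, hz⟩ := K_compact.exists_isMinOn ⟨_, h00⟩ hc
  have hzpos : 0 < f z := hp z hzK
  set K' : Set (ℝ × ℝ) := (Set.Icc (1/4:ℝ) (1/2)) ×ˢ (Set.Icc (-(1/2):ℝ) (1/2)) with hK'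
  have hK'sub : K' ⊆ Bset (1/2) := by
    rw [Bset_eq]
    apply Set.prod_mono _ subset_rfl
    intro t ht
    exact ⟨by linarith [ht.1], ht.2⟩
  have hgc : ContinuousOn (fun x : ℝ × ℝ => x.1 ^ 2 * f x) (Bset (1/2)) :=
    ((continuous_fst.pow 2).continuousOn).mul hc
  have hint : IntegrableOn (fun x : ℝ × ℝ => x.1 ^ 2 * f x) (Bset (1/2)) volume :=
    hgc.integrableOn_compact K_compact
  have h1 : ∫ x in K', x.1 ^ 2 * f x ≤ ∫ x in Bset (1/2), x.1 ^ 2 * f x := by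
    apply setIntegral_mono_set hint
    · filter_upwards [ae_restrict_mem measurableSet_K] with x hx
      simp only [Pi.zero_apply]
      nlinarith [hp x hx, sq_nonneg x.1]
    · exact Filter.Eventually.of_forall hK'sub
  have hvol : volume K' = ENNReal.ofReal (1/4) := by
    rw [hK', Measure.volume_eq_prod, Measure.prod_prod, Real.volume_Icc, Real.volume_Icc,
      ← ENNReal.ofReal_mul (by norm_num)]
    norm_num
  have h2 : (f z * (1/16)) * (volume K').toReal ≤ ∫ x in K', x.1 ^ 2 * f x := by
    apply setIntegral_ge_of_const_le_real (measurableSet_Icc.prod measurableSet_Icc)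
    · rw [hvol]; exact ENNReal.ofReal_ne_top
    · intro x hx
      have hx1 : (1/4:ℝ) ≤ x.1 := hx.1.1
      have hfx : f z ≤ f x := hz (hK'sub hx)
      have hx1sq : (1/16:ℝ) ≤ x.1^2 := by nlinarith
      nlinarith [mul_le_mul hx1sq hfx hzpos.le (by nlinarith : (0:ℝ) ≤ x.1^2)]
    · exact hint.mono_set hK'sub
  rw [hvol, ENNReal.toReal_ofReal (by norm_num)] at h2
  nlinarith

lemma phiOf_eq (m : ℕ) (qq : ℤ × ℤ → ℝ) (θ : ℝ × ℝ) :
    phiOf m qq θ = ∑ x ∈ Lam m, qq x * Real.cos (dotP θ x) := by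
  rw [phiOf, Complex.re_sum]
  refine Finset.sum_congr rfl fun x _ => ?_
  rw [cexp, mul_comm Complex.I ((dotP θ x : ℝ) : ℂ), Complex.mul_re,
    Complex.exp_ofReal_mul_I_re]
  simp [mul_comm]


lemma ceil_neg_half (m : ℝ) : ⌈-m/2⌉ = -⌊m/2⌋ := by rw [neg_div, Int.ceil_neg]

lemma Lam_mem_negfst {m : ℝ} {x : ℤ × ℤ} : ((-x.1, x.2) ∈ Lam m) ↔ x ∈ Lam m := by
  simp only [Lam, Finset.mem_product, Finset.mem_Icc, ceil_neg_half]
  omega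

lemma Lam_mem_swap {m : ℝ} {x : ℤ × ℤ} : ((x.2, x.1) ∈ Lam m) ↔ x ∈ Lam m := by
  simp only [Lam, Finset.mem_product]
  tauto

lemma uunif_negfst (m : ℕ) (x : ℤ × ℤ) : uunif m (-x.1, x.2) = uunif m x := by
  have hne : ((-x.1, x.2) : ℤ × ℤ) = 0 ↔ x = 0 := by
    rw [Prod.ext_iff, Prod.ext_iff]
    simp [neg_eq_zero]
  have hmem : ((-x.1, x.2) ∈ (Lam m).erase 0) ↔ x ∈ (Lam m).erase 0 := by
    simp only [Finset.mem_erase, Lam_mem_negfst, Ne, hne]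
  simp only [uunif]
  rw [if_congr hmem rfl rfl]

lemma uunif_swap (m : ℕ) (x : ℤ × ℤ) : uunif m (x.2, x.1) = uunif m x := by
  have hne : ((x.2, x.1) : ℤ × ℤ) = 0 ↔ x = 0 := by
    rw [Prod.ext_iff, Prod.ext_iff]
    simp only [Prod.fst_zero, Prod.snd_zero]
    tauto
  have hmem : ((x.2, x.1) ∈ (Lam m).erase 0) ↔ x ∈ (Lam m).erase 0 := by
    simp only [Finset.mem_erase, Lam_mem_swap, Ne, hne]
  simp only [uunif]
  rw [if_congr hmem rfl rfl]

lemma qMf_negfst {f : ℝ × ℝ → ℝ} {c : ℕ → ℝ}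
    (hfsym2 : ∀ x ∈ Bset (1/2), f (x.1, x.2) = f (-x.1, x.2)) {k : ℕ} (hk : 0 < k)
    (x : ℤ × ℤ) : qMf f c (2*k) (-x.1, x.2) = qMf f c (2*k) x := by
  unfold qMf
  rw [uunif_negfst]
  by_cases hx : x ∈ (Lam ((2*k : ℕ) : ℝ)).erase 0
  · have hxL : x ∈ Lam ((2*k : ℕ) : ℝ) := Finset.mem_of_mem_erase hx
    have hmemK := lattice_mem_K hk hxL
    have h2 := hfsym2 _ hmemK
    simp only at h2
    have heq : f ((((-x.1 : ℤ)) : ℝ)/((2*k:ℕ):ℝ), ((x.2 : ℤ) : ℝ)/((2*k:ℕ):ℝ))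
        = f (((x.1 : ℤ) : ℝ)/((2*k:ℕ):ℝ), ((x.2 : ℤ) : ℝ)/((2*k:ℕ):ℝ)) := by
      rw [Int.cast_neg, neg_div]
      exact h2.symm
    rw [heq]
  · rw [uunif, if_neg hx, mul_zero, mul_zero]

lemma qMf_swap {f : ℝ × ℝ → ℝ} {c : ℕ → ℝ}
    (hfsym1 : ∀ x ∈ Bset (1/2), f (x.1, x.2) = f (x.2, x.1)) {k : ℕ} (hk : 0 < k)
    (x : ℤ × ℤ) : qMf f c (2*k) (x.2, x.1) = qMf f c (2*k) x := by
  unfold qMf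
  rw [uunif_swap]
  by_cases hx : x ∈ (Lam ((2*k : ℕ) : ℝ)).erase 0
  · have hxL : x ∈ Lam ((2*k : ℕ) : ℝ) := Finset.mem_of_mem_erase hx
    have hmemK := lattice_mem_K hk hxL
    have h2 := hfsym1 _ hmemK
    simp only at h2
    rw [← h2]
  · rw [uunif, if_neg hx, mul_zero, mul_zero]

lemma var_swap_eq {f : ℝ × ℝ → ℝ} {c : ℕ → ℝ}
    (hfsym1 : ∀ x ∈ Bset (1/2), f (x.1, x.2) = f (x.2, x.1)) {k : ℕ} (hk : 0 < k) :
    ∑ x ∈ Lam ((2*k : ℕ) : ℝ), ((x.2 : ℝ))^2 * qMf f c (2*k) x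
      = ∑ x ∈ Lam ((2*k : ℕ) : ℝ), ((x.1 : ℝ))^2 * qMf f c (2*k) x := by
  apply Finset.sum_equiv (Equiv.prodComm ℤ ℤ)
  · intro i
    simp only [Equiv.prodComm_apply, Prod.swap]
    exact Lam_mem_swap.symm
  · intro i hi
    simp only [Equiv.prodComm_apply, Prod.swap]
    rw [qMf_swap hfsym1 hk]

lemma cross_zero {f : ℝ × ℝ → ℝ} {c : ℕ → ℝ}
    (hfsym2 : ∀ x ∈ Bset (1/2), f (x.1, x.2) = f (-x.1, x.2)) {k : ℕ} (hk : 0 < k) :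
    ∑ x ∈ Lam ((2*k : ℕ) : ℝ), ((x.1 : ℝ) * (x.2 : ℝ)) * qMf f c (2*k) x = 0 := by
  refine Finset.sum_involution (fun a _ => (-a.1, a.2)) ?_ ?_ ?_ ?_
  · intro a ha
    rw [qMf_negfst hfsym2 hk]
    push_cast
    ring
  · intro a ha hne
    intro hcontra
    apply hne
    have h1 : -a.1 = a.1 := congrArg Prod.fst hcontra
    have h2 : a.1 = 0 := by omega
    rw [h2]
    push_cast
    ring
  · intro a ha
    exact_mod_cast Lam_mem_negfst.mpr ha
  · intro a ha
    simp

lemma dot_expand {f : ℝ × ℝ → ℝ} {c : ℕ → ℝ}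
    (hfsym1 : ∀ x ∈ Bset (1/2), f (x.1, x.2) = f (x.2, x.1))
    (hfsym2 : ∀ x ∈ Bset (1/2), f (x.1, x.2) = f (-x.1, x.2)) {k : ℕ} (hk : 0 < k)
    (θ : ℝ × ℝ) :
    ∑ x ∈ Lam ((2*k : ℕ) : ℝ), qMf f c (2*k) x * (dotP θ x)^2
      = (∑ x ∈ Lam ((2*k : ℕ) : ℝ), ((x.1 : ℝ))^2 * qMf f c (2*k) x) * sqNormR θ := by
  have hterm : ∀ x : ℤ × ℤ, qMf f c (2*k) x * (dotP θ x)^2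
      = θ.1^2*(((x.1 : ℝ))^2 * qMf f c (2*k) x)
        + (2*θ.1*θ.2)*((((x.1 : ℝ))*((x.2 : ℝ))) * qMf f c (2*k) x)
        + θ.2^2*(((x.2 : ℝ))^2 * qMf f c (2*k) x) := by
    intro x
    rw [dotP]
    ring
  simp_rw [hterm, Finset.sum_add_distrib, ← Finset.mul_sum]
  rw [cross_zero hfsym2 hk, var_swap_eq hfsym1 hk, mul_zero, add_zero, sqNormR]
  ring


lemma tendsto_M : Tendsto (fun k : ℕ => ((2*k:ℕ):ℝ)) atTop atTop := by
  apply tendsto_natCast_atTop_atTop.comp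
  exact Filter.tendsto_atTop_atTop_of_monotone (fun a b hab => by omega) (fun b => ⟨b, by omega⟩)

lemma tendsto_Minv_sq : Tendsto (fun k : ℕ => ((((2*k:ℕ):ℝ))^2)⁻¹) atTop (𝓝 0) := by
  have hsq : Tendsto (fun k : ℕ => ((2*k:ℕ):ℝ)^2) atTop atTop := by
    have := tendsto_M.atTop_mul_atTop₀ tendsto_M
    simpa [pow_two] using this
  exact hsq.inv_tendsto_atTop

lemma zero_mem_Lam (m : ℕ) : (0 : ℤ × ℤ) ∈ Lam (m:ℝ) := by
  have hm : (0:ℝ) ≤ (m:ℝ) := Nat.cast_nonneg m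
  have h1 : (⌈-(m:ℝ)/2⌉ : ℤ) ≤ 0 := by
    apply Int.ceil_le.mpr
    push_cast
    linarith
  have h2 : (0:ℤ) ≤ ⌊(m:ℝ)/2⌋ := by
    apply Int.le_floor.mpr
    push_cast
    linarith
  simp only [Lam, Finset.mem_product, Finset.mem_Icc, Prod.fst_zero, Prod.snd_zero]
  exact ⟨⟨h1, h2⟩, h1, h2⟩

lemma tendsto_ratio {f : ℝ × ℝ → ℝ}
    (hfpos : ∀ x ∈ Bset (1/2), 0 < f x) (hfcont : ContinuousOn f (Bset (1/2))) :
    Tendsto (fun k : ℕ =>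
      (∑ x ∈ Lam ((2*k:ℕ):ℝ), ((x.1:ℝ)/((2*k:ℕ):ℝ))^2
          * f ((x.1:ℝ)/((2*k:ℕ):ℝ), (x.2:ℝ)/((2*k:ℕ):ℝ)))
        / (∑ x ∈ (Lam ((2*k:ℕ):ℝ)).erase 0,
            f ((x.1:ℝ)/((2*k:ℕ):ℝ), (x.2:ℝ)/((2*k:ℕ):ℝ))))
      atTop
      (𝓝 ((∫ x in Bset (1/2), x.1^2 * f x) / (∫ x in Bset (1/2), f x))) := by
  have hI0 := integral_pos_of_pos hfcont hfpos
  have hnum := tendsto_riemann (fun y => y.1^2 * f y)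
    (((continuous_fst.pow 2).continuousOn).mul hfcont)
  have hden := tendsto_riemann f hfcont
  have hf00 : Tendsto (fun k : ℕ => ((((2*k:ℕ):ℝ))^2)⁻¹ * f (0, 0)) atTop (𝓝 0) := by
    have := tendsto_Minv_sq.mul_const (f (0, 0))
    simpa using this
  have hden' : Tendsto (fun k : ℕ => ((((2*k:ℕ):ℝ))^2)⁻¹ *
      ∑ x ∈ (Lam ((2*k:ℕ):ℝ)).erase 0,
        f ((x.1:ℝ)/((2*k:ℕ):ℝ), (x.2:ℝ)/((2*k:ℕ):ℝ)))
      atTop (𝓝 (∫ x in Bset (1/2), f x)) := by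
    have h := hden.sub hf00
    rw [sub_zero] at h
    apply h.congr
    intro k
    rw [Finset.sum_erase_eq_sub (zero_mem_Lam (2*k))]
    rw [mul_sub]
    congr 2
    norm_num
  have hlim := hnum.div hden' hI0.ne'
  apply hlim.congr'
  filter_upwards [Filter.eventually_ge_atTop 1] with k hk
  have hM : (((2*k:ℕ):ℝ))^2 ≠ 0 := by
    have : (1:ℕ) ≤ k := hk
    positivity
  simp only [Pi.div_apply]
  rw [mul_div_mul_left _ _ (inv_ne_zero hM)]

end P1aux


set_option maxHeartbeats 1000000 in
/-- Property (P1) for the distributions `q_M(x) = c_M f(x/M) u_M(x)`: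
for every `ε > 0` there are `δ > 0` and `M₀` such that for all even `M ≥ M₀` and
all `θ ∈ B(δ/M)`, `θ ≠ 0`, the ratio `(1 − φ_M(θ))/(σ²M²|θ|²/2)` lies in `(1−ε, 1+ε)`,
where `σ² = c₀ ∫_{B(1/2)} x₁² f(x) dx` and `c₀ = 1/∫_{B(1/2)} f(x) dx`. -/
theorem prop_suff_P1 (f : ℝ × ℝ → ℝ) (c : ℕ → ℝ)
    (hfpos : ∀ x ∈ Bset (1 / 2), 0 < f x)
    (hfcont : ContinuousOn f (Bset (1 / 2)))
    (hfsym1 : ∀ x ∈ Bset (1 / 2), f (x.1, x.2) = f (x.2, x.1))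
    (hfsym2 : ∀ x ∈ Bset (1 / 2), f (x.1, x.2) = f (-x.1, x.2))
    (hcpos : ∀ m : ℕ, Even m → 0 < m → 0 < c m)
    (hcsum : ∀ m : ℕ, Even m → 0 < m → ∑ x ∈ (Lam m).erase 0, qMf f c m x = 1) :
    ∀ ε > (0 : ℝ), ∃ δ > (0 : ℝ), ∃ M₀ : ℕ, ∀ m : ℕ, Even m → M₀ ≤ m →
      ∀ θ : ℝ × ℝ, θ ≠ 0 → supNorm θ ≤ δ / m →
      (1 - phiOf m (qMf f c m) θ) /
          ((∫ x in Bset (1 / 2), f x)⁻¹ * (∫ x in Bset (1 / 2), x.1 ^ 2 * f x)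
            * (m : ℝ) ^ 2 * sqNormR θ / 2)
        ∈ Set.Ioo (1 - ε) (1 + ε) := by
  intro ε hε
  have hI0 : 0 < ∫ x in Bset (1/2), f x := P1aux.integral_pos_of_pos hfcont hfpos
  have hI2 : 0 < ∫ x in Bset (1/2), x.1^2 * f x := P1aux.integral_x1sq_pos hfcont hfpos
  set I0 : ℝ := ∫ x in Bset (1/2), f x with hI0def
  set I2 : ℝ := ∫ x in Bset (1/2), x.1^2 * f x with hI2def
  set σ2 : ℝ := I0⁻¹ * I2 with hσ2def
  have hσ2 : 0 < σ2 := by positivity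
  set ε₀ : ℝ := min ε 1 with hε₀def
  have hε₀ : 0 < ε₀ := lt_min hε one_pos
  have hε₀1 : ε₀ ≤ 1 := min_le_right _ _
  have hε₀ε : ε₀ ≤ ε := min_le_left _ _
  set δ : ℝ := min 1 (Real.sqrt (ε₀/5)) with hδdef
  have hδpos : 0 < δ := lt_min one_pos (Real.sqrt_pos.mpr (by positivity))
  have hδ1 : δ ≤ 1 := min_le_left _ _
  have hδsq : δ^2 ≤ ε₀/5 := by
    have h1 : δ ≤ Real.sqrt (ε₀/5) := min_le_right _ _
    have h2 : δ^2 ≤ (Real.sqrt (ε₀/5))^2 := pow_le_pow_left₀ hδpos.le h1 2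
    rwa [Real.sq_sqrt (by positivity : (0:ℝ) ≤ ε₀/5)] at h2
  have hlim := P1aux.tendsto_ratio hfpos hfcont
  rw [Metric.tendsto_atTop] at hlim
  obtain ⟨K₀, hK₀⟩ := hlim (σ2*ε₀/3) (by positivity)
  refine ⟨δ, hδpos, 2*K₀+2, ?_⟩
  intro m hmeven hmge θ hθne hθ
  obtain ⟨j, hj⟩ := hmeven
  have hm2 : m = 2*j := by omega
  subst hm2
  have hkK : K₀ ≤ j := by omega
  have hkpos : 0 < j := by omega
  have hkR : (1:ℝ) ≤ (j:ℝ) := by exact_mod_cast hkpos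
  have hjne : (j:ℝ) ≠ 0 := by positivity
  have hMpos : (0:ℝ) < ((2*j:ℕ):ℝ) := by
    have : (0:ℕ) < 2*j := by omega
    exact_mod_cast this
  have hM2j : ((2*j:ℕ):ℝ) = 2*(j:ℝ) := by push_cast; ring
  -- basic facts about q
  have h0L : (0 : ℤ × ℤ) ∈ Lam ((2*j:ℕ):ℝ) := P1aux.zero_mem_Lam (2*j)
  have heven : Even (2*j) := ⟨j, by ring⟩
  have hq0 : qMf f c (2*j) 0 = 0 := by
    rw [qMf, uunif, if_neg (Finset.notMem_erase _ _), mul_zero]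
  have hq_nonneg : ∀ x : ℤ × ℤ, 0 ≤ qMf f c (2*j) x := by
    intro x
    rw [qMf, uunif]
    by_cases hx : x ∈ (Lam ((2*j:ℕ):ℝ)).erase 0
    · rw [if_pos hx]
      have hfx := hfpos _ (P1aux.lattice_mem_K hkpos (Finset.mem_of_mem_erase hx))
      have hc' := hcpos (2*j) heven (by omega)
      positivity
    · rw [if_neg hx, mul_zero]
  have hqsum : ∑ x ∈ Lam ((2*j:ℕ):ℝ), qMf f c (2*j) x = 1 := by
    have h := hcsum (2*j) heven (by omega)
    rw [Finset.sum_erase_eq_sub h0L, hq0, sub_zero] at h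
    exact h
  -- the variance sum A and its value
  set F : ℝ := ∑ x ∈ (Lam ((2*j:ℕ):ℝ)).erase 0,
    f ((x.1:ℝ)/((2*j:ℕ):ℝ), (x.2:ℝ)/((2*j:ℕ):ℝ)) with hFdef
  set Sg2 : ℝ := ∑ x ∈ Lam ((2*j:ℕ):ℝ),
    ((x.1:ℝ)/((2*j:ℕ):ℝ))^2 * f ((x.1:ℝ)/((2*j:ℕ):ℝ), (x.2:ℝ)/((2*j:ℕ):ℝ)) with hSg2def
  set A : ℝ := ∑ x ∈ Lam ((2*j:ℕ):ℝ), ((x.1:ℝ))^2 * qMf f c (2*j) x with hAdef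
  have hFpos : 0 < F := by
    rw [hFdef]
    apply Finset.sum_pos
    · intro x hx
      exact hfpos _ (P1aux.lattice_mem_K hkpos (Finset.mem_of_mem_erase hx))
    · refine ⟨((1:ℤ), (0:ℤ)), ?_⟩
      rw [Finset.mem_erase]
      constructor
      · simp [Prod.ext_iff]
      · rw [P1aux.Lam_two_mul]
        simp only [Finset.mem_product, Finset.mem_Icc]
        omega
  have hcN : c (2*j) * ((((Lam ((2*j:ℕ):ℝ)).erase 0).card : ℝ))⁻¹ = F⁻¹ := by
    have h := hcsum (2*j) heven (by omega)
    have he : ∑ x ∈ (Lam ((2*j:ℕ):ℝ)).erase 0, qMf f c (2*j) x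
        = (c (2*j) * ((((Lam ((2*j:ℕ):ℝ)).erase 0).card : ℝ))⁻¹) * F := by
      rw [hFdef, Finset.mul_sum]
      refine Finset.sum_congr rfl (fun x hx => ?_)
      rw [qMf, uunif, if_pos hx]
      ring
    rw [he, mul_comm] at h
    exact eq_inv_of_mul_eq_one_right h
  have hAv : A = ((2*j:ℕ):ℝ)^2 * (Sg2 / F) := by
    have h1 : A = ∑ x ∈ (Lam ((2*j:ℕ):ℝ)).erase 0, ((x.1:ℝ))^2 * qMf f c (2*j) x := by
      rw [hAdef, eq_comm, Finset.sum_erase_eq_sub h0L]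
      simp [hq0]
    have h2 : ∑ x ∈ (Lam ((2*j:ℕ):ℝ)).erase 0, ((x.1:ℝ))^2 * qMf f c (2*j) x
        = F⁻¹ * ∑ x ∈ (Lam ((2*j:ℕ):ℝ)).erase 0,
            ((x.1:ℝ))^2 * f ((x.1:ℝ)/((2*j:ℕ):ℝ), (x.2:ℝ)/((2*j:ℕ):ℝ)) := by
      rw [Finset.mul_sum]
      refine Finset.sum_congr rfl (fun x hx => ?_)
      rw [qMf, uunif, if_pos hx, ← hcN]
      ring
    have h3 : ∑ x ∈ (Lam ((2*j:ℕ):ℝ)).erase 0,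
        ((x.1:ℝ))^2 * f ((x.1:ℝ)/((2*j:ℕ):ℝ), (x.2:ℝ)/((2*j:ℕ):ℝ))
        = ((2*j:ℕ):ℝ)^2 * Sg2 := by
      rw [Finset.sum_erase_eq_sub h0L]
      have hz : (((0:ℤ×ℤ).1:ℝ))^2
          * f ((((0:ℤ×ℤ).1:ℝ))/((2*j:ℕ):ℝ), (((0:ℤ×ℤ).2:ℝ))/((2*j:ℕ):ℝ)) = 0 := by
        simp
      rw [hz, sub_zero, hSg2def, Finset.mul_sum]
      refine Finset.sum_congr rfl (fun x hx => ?_)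
      rw [div_pow]
      field_simp
    rw [h1, h2, h3]
    field_simp
    try ring
  -- closeness of Sg2/F to σ2
  have hw' := hK₀ j hkK
  rw [Real.dist_eq] at hw'
  have hσ2' : σ2 = I2 / I0 := by rw [hσ2def, inv_mul_eq_div]
  rw [← hSg2def, ← hFdef, ← hI2def, ← hI0def, ← hσ2'] at hw'
  have hvdist : |Sg2/F - σ2| < σ2*ε₀/3 := hw'
  set w : ℝ := (Sg2/F)/σ2 with hwdef
  have hw : |w - 1| < ε₀/3 := by
    have h1 : w - 1 = (Sg2/F - σ2)/σ2 := by
      rw [hwdef]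
      field_simp
    rw [h1, abs_div, abs_of_pos hσ2]
    rw [div_lt_iff₀ hσ2]
    calc |Sg2/F - σ2| < σ2*ε₀/3 := hvdist
      _ = ε₀/3*σ2 := by ring
  have hw23 : 2/3 ≤ w := by
    have := abs_lt.mp hw
    linarith [this.1, hε₀1]
  have hw43 : w ≤ 4/3 := by
    have := abs_lt.mp hw
    linarith [this.2, hε₀1]
  -- the characteristic function computation
  have hphi : 1 - phiOf (2*j) (qMf f c (2*j)) θ
      = ∑ x ∈ Lam ((2*j:ℕ):ℝ), qMf f c (2*j) x * (1 - Real.cos (dotP θ x)) := by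
    rw [P1aux.phiOf_eq]
    have e : ∑ x ∈ Lam ((2*j:ℕ):ℝ), qMf f c (2*j) x * (1 - Real.cos (dotP θ x))
        = (∑ x ∈ Lam ((2*j:ℕ):ℝ), qMf f c (2*j) x)
          - ∑ x ∈ Lam ((2*j:ℕ):ℝ), qMf f c (2*j) x * Real.cos (dotP θ x) := by
      rw [← Finset.sum_sub_distrib]
      exact Finset.sum_congr rfl (fun x _ => by ring)
    rw [e, hqsum]
  have hdot : ∀ x ∈ Lam ((2*j:ℕ):ℝ), |dotP θ x| ≤ δ := by
    intro x hx
    rw [P1aux.Lam_two_mul] at hx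
    simp only [Finset.mem_product, Finset.mem_Icc] at hx
    have hx1 : |(x.1:ℝ)| ≤ (j:ℝ) := by
      rw [abs_le]
      constructor <;> [exact_mod_cast hx.1.1; exact_mod_cast hx.1.2]
    have hx2 : |(x.2:ℝ)| ≤ (j:ℝ) := by
      rw [abs_le]
      constructor <;> [exact_mod_cast hx.2.1; exact_mod_cast hx.2.2]
    unfold supNorm at hθ
    have hθ1 : |θ.1| ≤ δ/((2*j:ℕ):ℝ) := le_trans (le_max_left _ _) hθ
    have hθ2 : |θ.2| ≤ δ/((2*j:ℕ):ℝ) := le_trans (le_max_right _ _) hθ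
    have e : δ/((2*j:ℕ):ℝ)*(j:ℝ) + δ/((2*j:ℕ):ℝ)*(j:ℝ) = δ := by
      rw [hM2j]
      field_simp
      ring
    calc |dotP θ x| ≤ |θ.1| * |(x.1:ℝ)| + |θ.2| * |(x.2:ℝ)| := by
          rw [dotP]
          refine (abs_add_le _ _).trans ?_
          rw [abs_mul, abs_mul]
        _ ≤ δ/((2*j:ℕ):ℝ)*(j:ℝ) + δ/((2*j:ℕ):ℝ)*(j:ℝ) := by
          apply add_le_add
          · exact mul_le_mul hθ1 hx1 (abs_nonneg _) (by positivity)
          · exact mul_le_mul hθ2 hx2 (abs_nonneg _) (by positivity)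
        _ = δ := e
  have hq_t2 : ∑ x ∈ Lam ((2*j:ℕ):ℝ), qMf f c (2*j) x * (dotP θ x)^2
      = A * sqNormR θ := by
    rw [hAdef]
    exact P1aux.dot_expand hfsym1 hfsym2 hkpos θ
  -- main estimate
  have hnum_bound : |(1 - phiOf (2*j) (qMf f c (2*j)) θ) - A * sqNormR θ / 2|
      ≤ 5/96*δ^2*(A * sqNormR θ) := by
    have e1 : (1 - phiOf (2*j) (qMf f c (2*j)) θ) - A * sqNormR θ / 2
        = ∑ x ∈ Lam ((2*j:ℕ):ℝ),
            qMf f c (2*j) x * ((1 - Real.cos (dotP θ x)) - (dotP θ x)^2/2) := by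
      rw [hphi, ← hq_t2, Finset.sum_div, ← Finset.sum_sub_distrib]
      refine Finset.sum_congr rfl (fun x hx => ?_)
      ring
    rw [e1]
    calc |∑ x ∈ Lam ((2*j:ℕ):ℝ),
          qMf f c (2*j) x * ((1 - Real.cos (dotP θ x)) - (dotP θ x)^2/2)|
        ≤ ∑ x ∈ Lam ((2*j:ℕ):ℝ),
          |qMf f c (2*j) x * ((1 - Real.cos (dotP θ x)) - (dotP θ x)^2/2)| :=
        Finset.abs_sum_le_sum_abs _ _
      _ ≤ ∑ x ∈ Lam ((2*j:ℕ):ℝ),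
          qMf f c (2*j) x * (5/96*(δ^2*(dotP θ x)^2)) := by
        refine Finset.sum_le_sum (fun x hx => ?_)
        rw [abs_mul, abs_of_nonneg (hq_nonneg x)]
        apply mul_le_mul_of_nonneg_left _ (hq_nonneg x)
        set t : ℝ := dotP θ x with htdef
        have ht : |t| ≤ δ := hdot x hx
        have ht1 : |t| ≤ 1 := ht.trans hδ1
        have hb := Real.cos_bound ht1
        have e2 : (1 - Real.cos t) - t^2/2 = -(Real.cos t - (1 - t^2/2)) := by ring
        rw [e2, abs_neg]
        have ht2 : t^2 ≤ δ^2 := sq_le_sq' (abs_le.mp ht).1 (abs_le.mp ht).2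
        have e4 : |t|^4 = t^2*t^2 := by rw [← sq_abs t]; ring
        calc |Real.cos t - (1 - t^2/2)| ≤ |t|^4 * (5/96) := hb
          _ = t^2*t^2 * (5/96) := by rw [e4]
          _ ≤ δ^2*t^2 * (5/96) := by
            apply mul_le_mul_of_nonneg_right _ (by norm_num)
            exact mul_le_mul_of_nonneg_right ht2 (sq_nonneg t)
          _ = 5/96*(δ^2*t^2) := by ring
      _ = 5/96*δ^2*(A * sqNormR θ) := by
        have e5 : ∑ x ∈ Lam ((2*j:ℕ):ℝ), qMf f c (2*j) x * (5/96*(δ^2*(dotP θ x)^2))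
            = ∑ x ∈ Lam ((2*j:ℕ):ℝ), (5/96*δ^2)*(qMf f c (2*j) x*(dotP θ x)^2) :=
          Finset.sum_congr rfl (fun x _ => by ring)
        rw [e5, ← Finset.mul_sum, hq_t2]
  -- final assembly
  have hS : 0 < sqNormR θ := by
    have hne : θ.1 ≠ 0 ∨ θ.2 ≠ 0 := by
      by_contra h
      push_neg at h
      exact hθne (Prod.ext h.1 h.2)
    rw [sqNormR]
    rcases hne with h | h
    · linarith [pow_two_pos_of_ne_zero h, sq_nonneg θ.2]
    · linarith [pow_two_pos_of_ne_zero h, sq_nonneg θ.1]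
  set Num : ℝ := 1 - phiOf (2*j) (qMf f c (2*j)) θ with hNumdef
  set D : ℝ := σ2 * ((2*j:ℕ):ℝ)^2 * sqNormR θ / 2 with hDdef
  have hD : 0 < D := by
    rw [hDdef]
    exact div_pos (mul_pos (mul_pos hσ2 (pow_pos hMpos 2)) hS) two_pos
  have hvD : w * D = A * sqNormR θ / 2 := by
    rw [hwdef, hDdef, hAv]
    field_simp
    try ring
  have h2 : Num/D - w = (Num - A * sqNormR θ/2)/D := by
    rw [← hvD]
    field_simp
    try ring
  have h3 : |Num/D - w| ≤ (5/96*δ^2*(A*sqNormR θ))/D := by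
    rw [h2, abs_div, abs_of_pos hD]
    gcongr
  have hASD : (A * sqNormR θ)/D = 2*w := by
    rw [hDdef, hwdef, hAv]
    field_simp
    try ring
  have h4 : (5/96*δ^2*(A*sqNormR θ))/D = 5/48*δ^2*w := by
    rw [mul_div_assoc, hASD]
    ring
  have h5 : |Num/D - 1| ≤ |Num/D - w| + |w - 1| := abs_sub_le _ _ _
  have h6 : 5/48*δ^2*w ≤ 5/48*((ε₀/5)*(4/3)) := by
    have hw0 : (0:ℝ) ≤ w := by linarith
    have hmm := mul_le_mul hδsq hw43 hw0 (by positivity : (0:ℝ) ≤ ε₀/5)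
    linarith
  have h7 : |Num/D - 1| < ε₀ := by
    rw [h4] at h3
    have habs := abs_lt.mp hw
    calc |Num/D - 1| ≤ |Num/D - w| + |w - 1| := h5
      _ ≤ 5/48*δ^2*w + |w - 1| := by linarith
      _ < 5/48*((ε₀/5)*(4/3)) + ε₀/3 := by linarith
      _ ≤ ε₀ := by linarith
  rw [Set.mem_Ioo]
  have h8 := abs_lt.mp h7
  constructor
  · linarith [h8.1]
  · linarith [h8.2]
end
end

section
/- Let f be a positive continuous function on B(1/2) = {x ∈ ℝ² : ‖x‖_∞ ≤ 1/2} with f(x₁,x₂) = f(x₂,x₁) = f(−x₁,x₂), and for each even positive integer M let q_M(x) = c_M f(x/M) u_M(x) with c_M > 0 chosen so that ∑_x q_M(x) = 1, and let φ_M(θ) = ∑_{x ∈ ℤ²} e^{iθ·x} q_M(x). Set c̄ = sup_M c_M (which is finite). Then for every ε > 0 there exists a finite constant A (depending on ε) such that limsup_{M→∞} sup_{θ ∈ B(π) \ B(A/M)} φ_M(θ) ≤ ε c̄ (1 + 20 ‖f‖_∞). -/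
open Filter MeasureTheory Real Finset
open scoped BigOperators

noncomputable section

lemma abs_one_sub_exp {t : ℝ} (h1 : t ≠ 0) (h2 : |t| ≤ π) :
    2 * |t| / π ≤ ‖1 - Complex.exp (Complex.I * t)‖ := by
  have habs : ‖1 - Complex.exp (Complex.I * t)‖ = 2 * |Real.sin (t / 2)| := by
    rw [mul_comm Complex.I, Complex.exp_mul_I]
    have h : (1 : ℂ) - (Complex.cos t + Complex.sin t * Complex.I)
        = Complex.mk (1 - Real.cos t) (-Real.sin t) := by
      apply Complex.ext <;> simp [Complex.cos_ofReal_re, Complex.sin_ofReal_re]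
    rw [h, Complex.norm_def, Complex.normSq_mk]
    have h2' : (1 - Real.cos t) * (1 - Real.cos t) + -Real.sin t * -Real.sin t
        = 2 ^ 2 * ((1 - Real.cos t) / 2) := by
      have := Real.sin_sq_add_cos_sq t; nlinarith
    rw [h2', Real.sqrt_mul (by positivity), Real.sqrt_sq (by norm_num), ← Real.abs_sin_half]
  rw [habs]
  have hj : |t| / π ≤ |Real.sin (t / 2)| := by
    have h0 : (0:ℝ) ≤ |t| / 2 := by positivity
    have h1' : |t| / 2 ≤ π / 2 := by linarith
    have := Real.mul_le_sin h0 h1'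
    have hs : Real.sin (|t| / 2) ≤ |Real.sin (t / 2)| := by
      rcases abs_cases t with ⟨he, _⟩ | ⟨he, _⟩
      · rw [he]; exact le_abs_self _
      · rw [he, show -t / 2 = -(t/2) by ring, Real.sin_neg]
        exact neg_le_abs _
    have hπ : (0:ℝ) < π := Real.pi_pos
    calc |t| / π = (2 / π) * (|t| / 2) := by field_simp
    _ ≤ Real.sin (|t| / 2) := this
    _ ≤ |Real.sin (t / 2)| := hs
  rw [mul_div_assoc]; linarith


lemma chunk (z : ℂ) (hz : z ≠ 1) (hz1 : ‖z‖ = 1) (G : ℕ → ℂ) (S e : ℝ)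
    (l : ℕ) (hl : 0 < l) (hS : ∀ t, ‖G t‖ ≤ S)
    (hmod : ∀ s t : ℕ, s ≤ t → t - s ≤ l → ‖G t - G s‖ ≤ e) :
    ∀ N n : ℕ, n ≤ N * l →
      ‖∑ t ∈ Finset.range n, G t * z ^ t‖
        ≤ N * (2 / ‖1 - z‖) * S + e * n := by
  have hS0 : 0 ≤ S := le_trans (norm_nonneg _) (hS 0)
  have he0 : 0 ≤ e := le_trans (norm_nonneg _) (hmod 0 0 le_rfl (by omega))
  have hz0 : 0 < ‖1 - z‖ := by
    rw [norm_pos_iff]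
    intro h; apply hz; rw [sub_eq_zero] at h; exact h.symm
  have hC0 : 0 ≤ 2 / ‖1 - z‖ := by positivity
  have hgeom : ∀ a b : ℕ, a ≤ b →
      ‖∑ t ∈ Finset.Ico a b, z ^ t‖ ≤ 2 / ‖1 - z‖ := by
    intro a b hab
    rw [geom_sum_Ico hz hab, norm_div, norm_sub_rev z 1]
    gcongr
    calc ‖z ^ b - z ^ a‖ ≤ ‖z ^ b‖ + ‖z ^ a‖ :=
        norm_sub_le _ _
      _ = 2 := by rw [norm_pow, norm_pow, hz1, one_pow, one_pow]; norm_num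
  intro N
  induction N with
  | zero => intro n hn
            have : n = 0 := by omega
            subst this; simp
  | succ N ih =>
    intro n hn
    by_cases h : n ≤ N * l
    · refine (ih n h).trans ?_
      push_cast
      nlinarith [mul_nonneg hC0 hS0]
    · push_neg at h
      have h1 : N * l ≤ n := le_of_lt h
      have hn' : n ≤ N * l + l := by rw [Nat.succ_mul] at hn; exact hn
      rw [← Finset.sum_range_add_sum_Ico _ h1]
      push_cast
      have htail : ‖∑ t ∈ Finset.Ico (N*l) n, G t * z ^ t‖
          ≤ (2 / ‖1 - z‖) * S + e * (n - N * l : ℕ) := by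
        have hdecomp : ∀ t : ℕ, G t * z ^ t = G (N*l) * z ^ t + (G t - G (N*l)) * z ^ t := by
          intro t; ring
        calc ‖∑ t ∈ Finset.Ico (N*l) n, G t * z ^ t‖
            = ‖G (N*l) * ∑ t ∈ Finset.Ico (N*l) n, z ^ t
                + ∑ t ∈ Finset.Ico (N*l) n, (G t - G (N*l)) * z ^ t‖ := by
              rw [Finset.mul_sum, ← Finset.sum_add_distrib]
              congr 1; apply Finset.sum_congr rfl; intro t _; ring
          _ ≤ ‖G (N*l)‖ * ‖∑ t ∈ Finset.Ico (N*l) n, z ^ t‖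
              + ‖∑ t ∈ Finset.Ico (N*l) n, (G t - G (N*l)) * z ^ t‖ := by
              rw [← norm_mul]; exact norm_add_le _ _
          _ ≤ S * (2 / ‖1 - z‖) + e * (n - N * l : ℕ) := by
              apply add_le_add
              · exact mul_le_mul (hS _) (hgeom _ _ h1) (norm_nonneg _) hS0
              · calc ‖∑ t ∈ Finset.Ico (N*l) n, (G t - G (N*l)) * z ^ t‖
                    ≤ ∑ t ∈ Finset.Ico (N*l) n, ‖(G t - G (N*l)) * z ^ t‖ :=
                      norm_sum_le _ _
                  _ ≤ ∑ t ∈ Finset.Ico (N*l) n, e := by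
                      apply Finset.sum_le_sum
                      intro t ht
                      rw [norm_mul, norm_pow, hz1, one_pow, mul_one]
                      simp only [Finset.mem_Ico] at ht
                      exact hmod (N*l) t ht.1 (by omega)
                  _ = e * (n - N * l : ℕ) := by
                      rw [Finset.sum_const, Nat.card_Ico, nsmul_eq_mul, mul_comm]
          _ = (2 / ‖1 - z‖) * S + e * (n - N * l : ℕ) := by ring
      calc ‖∑ t ∈ Finset.range (N*l), G t * z ^ t
              + ∑ t ∈ Finset.Ico (N*l) n, G t * z ^ t‖
          ≤ ‖∑ t ∈ Finset.range (N*l), G t * z ^ t‖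
            + ‖∑ t ∈ Finset.Ico (N*l) n, G t * z ^ t‖ := norm_add_le _ _
        _ ≤ (N * (2 / ‖1 - z‖) * S + e * ((N*l : ℕ) : ℝ))
            + ((2 / ‖1 - z‖) * S + e * (n - N * l : ℕ)) := by
            apply add_le_add (ih _ le_rfl) htail
        _ ≤ (N+1) * (2 / ‖1 - z‖) * S + e * n := by
            push_cast [Nat.cast_sub h1]
            ring_nf
            exact le_rfl

lemma row_bound (z : ℂ) (hz : z ≠ 1) (hz1 : ‖z‖ = 1)
    (F : ℤ → ℂ) (S e : ℝ) (a : ℤ) (n l N : ℕ) (hn : 0 < n) (hl : 0 < l) (hNl : n ≤ N * l)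
    (hS : ∀ x ∈ Finset.Ico a (a + (n:ℤ)), ‖F x‖ ≤ S)
    (hmod : ∀ x ∈ Finset.Ico a (a + (n:ℤ)), ∀ y ∈ Finset.Ico a (a + (n:ℤ)),
      |x - y| ≤ (l:ℤ) → ‖F x - F y‖ ≤ e) :
    ‖∑ x ∈ Finset.Ico a (a + (n:ℤ)), F x * z ^ x‖
      ≤ N * (2 / ‖1 - z‖) * S + e * n := by
  have hz0 : z ≠ 0 := by
    intro h; rw [h] at hz1; simp at hz1
  set G : ℕ → ℂ := fun t => F (a + min t (n-1)) with hG
  have hmem : ∀ t : ℕ, a + (min t (n-1) : ℕ) ∈ Finset.Ico a (a + (n:ℤ)) := by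
    intro t
    simp only [Finset.mem_Ico]
    omega
  have key : (∑ x ∈ Finset.Ico a (a + (n:ℤ)), F x * z ^ x)
      = z ^ a * ∑ t ∈ Finset.range n, G t * z ^ t := by
    rw [Finset.mul_sum]
    apply Finset.sum_nbij' (i := fun x => (x - a).toNat) (j := fun t => a + (t:ℤ))
    · intro x hx
      simp only [Finset.mem_Ico] at hx
      simp only [Finset.mem_range]
      omega
    · intro t ht
      simp only [Finset.mem_range] at ht
      simp only [Finset.mem_Ico]
      omega
    · intro x hx
      simp only [Finset.mem_Ico] at hx
      omega
    · intro t ht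
      simp only [Finset.mem_range] at ht
      omega
    · intro x hx
      simp only [Finset.mem_Ico] at hx
      have h1 : G ((x - a).toNat) = F x := by
        show F (a + (((x - a).toNat ⊓ (n-1) : ℕ) : ℤ)) = F x
        have hmin : (x - a).toNat ⊓ (n - 1) = (x - a).toNat := by
          rw [min_eq_left]; omega
        rw [hmin]
        congr 1
        omega
      rw [h1]
      have h2 : (z : ℂ) ^ x = z ^ a * z ^ (((x - a).toNat : ℕ) : ℤ) := by
        rw [← zpow_add₀ hz0]
        congr 1
        omega
      rw [h2, zpow_natCast]
      ring
  rw [key, norm_mul]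
  have hza : ‖z ^ a‖ = 1 := by
    rw [norm_zpow, hz1, one_zpow]
  rw [hza, one_mul]
  apply chunk z hz hz1 G S e l hl _ _ N n hNl
  · intro t
    exact hS _ (hmem t)
  · intro s t hst hstl
    have := hmod _ (hmem t) _ (hmem s) ?_
    · exact this
    · have h1 : ((min t (n-1) : ℕ) : ℤ) - ((min s (n-1) : ℕ) : ℤ) ≤ (l : ℤ) := by
        have : min t (n-1) - min s (n-1) ≤ t - s := by omega
        omega
      rw [add_sub_add_left_eq_sub]
      rw [abs_le]
      omega

lemma rect_bound (z w : ℂ) (hz : z ≠ 1) (hz1 : ‖z‖ = 1) (hw1 : ‖w‖ = 1)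
    (g : ℤ → ℤ → ℂ) (S e : ℝ) (a : ℤ) (n l N : ℕ) (hn : 0 < n) (hl : 0 < l) (hNl : n ≤ N * l)
    (hS : ∀ x ∈ Finset.Ico a (a + (n:ℤ)), ∀ y ∈ Finset.Ico a (a + (n:ℤ)),
      ‖g x y‖ ≤ S)
    (hmod : ∀ y ∈ Finset.Ico a (a + (n:ℤ)), ∀ x ∈ Finset.Ico a (a + (n:ℤ)),
      ∀ x' ∈ Finset.Ico a (a + (n:ℤ)), |x - x'| ≤ (l:ℤ) →
      ‖g x y - g x' y‖ ≤ e) :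
    ‖∑ p ∈ Finset.Ico a (a + (n:ℤ)) ×ˢ Finset.Ico a (a + (n:ℤ)),
        g p.1 p.2 * z ^ p.1 * w ^ p.2‖
      ≤ n * (N * (2 / ‖1 - z‖) * S + e * n) := by
  rw [Finset.sum_product_right]
  calc ‖∑ y ∈ Finset.Ico a (a + (n:ℤ)), ∑ x ∈ Finset.Ico a (a + (n:ℤ)),
          g x y * z ^ x * w ^ y‖
      ≤ ∑ y ∈ Finset.Ico a (a + (n:ℤ)), ‖∑ x ∈ Finset.Ico a (a + (n:ℤ)),
          g x y * z ^ x * w ^ y‖ := norm_sum_le _ _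
    _ ≤ ∑ y ∈ Finset.Ico a (a + (n:ℤ)), (N * (2 / ‖1 - z‖) * S + e * n) := by
        apply Finset.sum_le_sum
        intro y hy
        have hrow : (∑ x ∈ Finset.Ico a (a + (n:ℤ)), g x y * z ^ x * w ^ y)
            = w ^ y * ∑ x ∈ Finset.Ico a (a + (n:ℤ)), g x y * z ^ x := by
          rw [Finset.mul_sum]; apply Finset.sum_congr rfl; intro x _; ring
        rw [hrow, norm_mul, norm_zpow, hw1, one_zpow, one_mul]
        exact row_bound z hz hz1 (fun x => g x y) S e a n l N hn hl hNl
          (fun x hx => hS x hx y hy)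
          (fun x hx x' hx' h => hmod y hy x hx x' hx' h)
    _ = n * (N * (2 / ‖1 - z‖) * S + e * n) := by
        have h : (a + (n:ℤ) - a).toNat = n := by omega
        rw [Finset.sum_const, Int.card_Ico, h, nsmul_eq_mul]

lemma lam_eq (m k : ℕ) (hk : m = 2 * k) :
    Lam (m:ℝ) = (Finset.Ico (-(k:ℤ)) (-(k:ℤ) + ((m+1 : ℕ) : ℤ))) ×ˢ
      (Finset.Ico (-(k:ℤ)) (-(k:ℤ) + ((m+1 : ℕ) : ℤ))) := by
  have h1 : -(m:ℝ) / 2 = ((-(k:ℤ) : ℤ) : ℝ) := by push_cast [hk]; ring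
  have h2 : (m:ℝ) / 2 = (((k:ℤ) : ℤ) : ℝ) := by push_cast [hk]; ring
  rw [Lam, h1, h2, Int.ceil_intCast, Int.floor_intCast]
  congr 1 <;>
  · ext x
    simp only [Finset.mem_Icc, Finset.mem_Ico]
    omega

lemma abs_exp_I (t : ℝ) : ‖Complex.exp (Complex.I * t)‖ = 1 := by
  rw [mul_comm, Complex.norm_exp_ofReal_mul_I]

lemma exp_I_ne_one {t : ℝ} (h1 : t ≠ 0) (h2 : |t| ≤ π) :
    Complex.exp (Complex.I * t) ≠ 1 := by
  intro h
  have h3 := abs_one_sub_exp h1 h2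
  rw [h, sub_self, norm_zero] at h3
  have h4 : 0 < |t| := abs_pos.2 h1
  have h5 := Real.pi_pos
  have h6 : 0 < 2 * |t| / π := by positivity
  linarith

lemma final_numeric (T mr S e : ℝ) (he : 0 < e) (hS0 : 0 ≤ S) (hm2 : 4 ≤ mr)
    (hTb : T ≤ (mr+1)*(e*mr*S + (e/2)*(mr+1)))
    (hmK' : 1 ≤ (mr^2 + 2*mr)*e) :
    T + S ≤ (mr^2 + 2*mr) * (e * (1 + 20*S)) := by
  have key1 : S ≤ (mr^2 + 2*mr)*e*S := by
    nlinarith [mul_le_mul_of_nonneg_right hmK' hS0]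
  have key2 : (e/2)*(mr+1)^2 ≤ e*mr^2 + 2*e*mr := by
    have h1 : (0:ℝ) ≤ (mr^2 + 2*mr - 1)/2 := by nlinarith
    nlinarith [mul_nonneg he.le h1]
  have key3 : (mr+1)*(e*mr*S) ≤ 2*(e*S*mr^2) := by
    nlinarith [mul_nonneg (mul_nonneg he.le hS0) (by nlinarith : (0:ℝ) ≤ mr^2 - mr)]
  have key4 : (0:ℝ) ≤ e*S*mr^2 := by positivity
  have key5 : (0:ℝ) ≤ e*S*mr := by positivity
  nlinarith [hTb, key1, key2, key3, key4, key5]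

set_option maxHeartbeats 1000000 in
lemma main_est (f : ℝ × ℝ → ℝ) (c : ℕ → ℝ) (S ε δ : ℝ) (hε : 0 < ε)
    (hδ0 : 0 < δ) (hδ1 : δ ≤ 1) (hS0 : 0 ≤ S)
    (hSb : ∀ x ∈ Bset (1/2), |f x| ≤ S)
    (hUC : ∀ u ∈ Bset (1/2), ∀ v ∈ Bset (1/2), dist u v < δ → |f u - f v| ≤ ε/2)
    (m : ℕ) (hme : Even m) (hm4 : 4 ≤ δ * m)
    (hmK : 1 ≤ (((m+1)^2 - 1 : ℕ) : ℝ) * ε)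
    (hcm : 0 ≤ c m)
    (θ : ℝ × ℝ) (hθπ : supNorm θ ≤ π) (hθA : 9*π/(δ*ε) / m < supNorm θ) :
    |phiOf m (qMf f c m) θ| ≤ c m * (ε * (1 + 20 * S)) := by
  have hπ := Real.pi_pos
  obtain ⟨k, hk⟩ := hme
  have hk' : m = 2 * k := by omega
  have hm2 : (4:ℝ) ≤ (m:ℝ) := by nlinarith [(Nat.cast_nonneg m : (0:ℝ) ≤ (m:ℝ))]
  have hm0 : (0:ℝ) < m := by linarith
  set A := 9*π/(δ*ε) with hA
  have hA0 : 0 < A := by positivity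
  set n := m + 1 with hn
  have hn0 : 0 < n := by omega
  set a : ℤ := -(k:ℤ) with ha
  set s := Finset.Ico a (a + (n:ℤ)) with hs
  have hLam : Lam (m:ℝ) = s ×ˢ s := lam_eq m k hk'
  have h0s : (0:ℤ) ∈ s := by
    simp only [hs, Finset.mem_Ico]
    omega
  have h0Lam : (0 : ℤ×ℤ) ∈ Lam (m:ℝ) := by
    rw [hLam]
    exact Finset.mem_product.2 ⟨h0s, h0s⟩
  set K := ((Lam (m:ℝ)).erase 0).card with hKdef
  have hcard_s : s.card = n := by
    rw [hs, Int.card_Ico]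
    omega
  have hK : K = n^2 - 1 := by
    rw [hKdef, Finset.card_erase_of_mem h0Lam, hLam, Finset.card_product, hcard_s]
    ring_nf
  have hKr : ((K:ℝ)) = (m:ℝ)^2 + 2*(m:ℝ) := by
    rw [hK]
    have h1 : 1 ≤ n^2 := Nat.one_le_iff_ne_zero.2 (by positivity)
    push_cast [Nat.cast_sub h1]
    rw [hn]; push_cast
    ring
  have hKpos : (0:ℝ) < (K:ℝ) := by nlinarith
  -- membership in B(1/2)
  have hmemB : ∀ x ∈ s, ∀ y ∈ s, (((x:ℝ))/m, ((y:ℝ))/m) ∈ Bset (1/2) := by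
    intro x hx y hy
    simp only [hs, Finset.mem_Ico] at hx hy
    have hxb : |(x:ℝ)| ≤ (m:ℝ)/2 := by
      have h1 : -(k:ℤ) ≤ x ∧ x ≤ (k:ℤ) := by omega
      have h2 : |(x:ℝ)| ≤ ((k:ℤ):ℝ) := by
        rw [abs_le]
        constructor
        · exact_mod_cast h1.1
        · exact_mod_cast h1.2
      have h3 : ((k:ℤ):ℝ) = (m:ℝ)/2 := by push_cast [hk']; ring
      linarith
    have hyb : |(y:ℝ)| ≤ (m:ℝ)/2 := by
      have h1 : -(k:ℤ) ≤ y ∧ y ≤ (k:ℤ) := by omega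
      have h2 : |(y:ℝ)| ≤ ((k:ℤ):ℝ) := by
        rw [abs_le]
        constructor
        · exact_mod_cast h1.1
        · exact_mod_cast h1.2
      have h3 : ((k:ℤ):ℝ) = (m:ℝ)/2 := by push_cast [hk']; ring
      linarith
    simp only [Bset, supNorm, Set.mem_setOf_eq, max_le_iff]
    constructor
    · rw [abs_div, abs_of_pos hm0, div_le_iff₀ hm0]
      linarith
    · rw [abs_div, abs_of_pos hm0, div_le_iff₀ hm0]
      linarith
  -- the block length and count
  set l := Nat.floor (δ*(m:ℝ)/2) with hldef
  have hl2 : (2:ℝ) ≤ δ*(m:ℝ)/2 := by linarith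
  have hl0 : 0 < l := by
    rw [hldef]
    have : (1:ℕ) ≤ ⌊δ*(m:ℝ)/2⌋₊ := Nat.le_floor (by push_cast; linarith)
    omega
  have hlle : (l:ℝ) ≤ δ*(m:ℝ)/2 := Nat.floor_le (by positivity)
  have hlge : δ*(m:ℝ)/4 ≤ (l:ℝ) := by
    have h1 : δ*(m:ℝ)/2 - 1 < (l:ℝ) := by
      rw [hldef]
      exact Nat.sub_one_lt_floor _
    linarith
  have hl0' : (0:ℝ) < (l:ℝ) := by positivity
  set N := n / l + 1 with hNdef
  have hNl : n ≤ N * l := by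
    have h1 := Nat.div_add_mod n l
    have h2 := Nat.mod_lt n hl0
    calc n = l * (n / l) + n % l := h1.symm
      _ ≤ l * (n / l) + l := by omega
      _ = (n / l + 1) * l := by ring
  have hNr : (N:ℝ) ≤ 9/δ := by
    have h1 : ((n / l : ℕ):ℝ) ≤ (n:ℝ)/(l:ℝ) := Nat.cast_div_le
    have h2 : (n:ℝ) ≤ 2*(m:ℝ) := by push_cast [hn]; linarith
    have h3 : (n:ℝ)/(l:ℝ) ≤ (2*(m:ℝ))/(δ*(m:ℝ)/4) :=
      div_le_div₀ (by positivity) h2 (by positivity) hlge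
    have h4 : (2*(m:ℝ))/(δ*(m:ℝ)/4) = 8/δ := by
      field_simp
      ring
    have h5 : (1:ℝ) ≤ 1/δ := by
      rw [le_div_iff₀ hδ0]; linarith
    have h6 : (8:ℝ)/δ + 1/δ = 9/δ := by ring
    have h7 : (N:ℝ) = ((n/l : ℕ):ℝ) + 1 := by push_cast [hNdef]; ring
    linarith
  -- exponential setup
  set z1 := Complex.exp (Complex.I * θ.1) with hz1def
  set z2 := Complex.exp (Complex.I * θ.2) with hz2def
  have hzw : ∀ x : ℤ×ℤ, cexp θ x = z1 ^ x.1 * z2 ^ x.2 := by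
    intro x
    rw [hz1def, hz2def, ← Complex.exp_int_mul, ← Complex.exp_int_mul, ← Complex.exp_add, cexp, dotP]
    congr 1
    push_cast
    ring
  set T := ∑ x ∈ Lam (m:ℝ), ((f (((x.1:ℝ))/m, ((x.2:ℝ))/m) : ℝ) : ℂ) * cexp θ x with hT
  have hq0 : qMf f c m 0 = 0 := by
    simp only [qMf, uunif, if_neg (Finset.notMem_erase (0:ℤ×ℤ) (Lam (m:ℝ)))]
    ring
  have hsum1 : ∑ x ∈ Lam (m:ℝ), cexp θ x * ((qMf f c m x : ℝ) : ℂ)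
      = ((c m : ℝ) : ℂ) * (((K:ℝ) : ℂ))⁻¹ * (T - ((f (0,0) : ℝ) : ℂ)) := by
    rw [← Finset.sum_erase (s := Lam (m:ℝ))
      (f := fun x => cexp θ x * ((qMf f c m x : ℝ):ℂ)) (a := (0:ℤ×ℤ))
      (by show cexp θ (0:ℤ×ℤ) * ((qMf f c m (0:ℤ×ℤ) : ℝ):ℂ) = 0
          rw [hq0]
          simp)]
    have hstep : ∑ x ∈ (Lam (m:ℝ)).erase 0, cexp θ x * ((qMf f c m x : ℝ):ℂ)
        = ((c m : ℝ):ℂ) * (((K:ℝ):ℂ))⁻¹ *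
          ∑ x ∈ (Lam (m:ℝ)).erase 0, ((f ((x.1:ℝ)/m, (x.2:ℝ)/m) : ℝ):ℂ) * cexp θ x := by
      rw [Finset.mul_sum]
      apply Finset.sum_congr rfl
      intro x hx
      simp only [qMf, uunif, if_pos hx, ← hKdef]
      push_cast
      ring
    rw [hstep]
    congr 1
    rw [hT, Finset.sum_erase_eq_sub h0Lam]
    congr 1
    have hc0 : cexp θ (0 : ℤ×ℤ) = 1 := by
      rw [cexp, dotP]
      norm_num
    rw [hc0, mul_one]
    norm_num
  have hphi_le : |phiOf m (qMf f c m) θ| ≤ (c m) * ((K:ℝ))⁻¹ * (‖T‖ + S) := by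
    rw [phiOf, hsum1]
    refine le_trans (Complex.abs_re_le_norm _) ?_
    rw [norm_mul, norm_mul, norm_inv, Complex.norm_real, Real.norm_eq_abs, Complex.norm_real, Real.norm_eq_abs,
      abs_of_nonneg hcm, abs_of_nonneg hKpos.le]
    apply mul_le_mul_of_nonneg_left ?_ (by positivity)
    calc ‖T - ((f (0,0):ℝ):ℂ)‖
        ≤ ‖T‖ + ‖((f (0,0):ℝ):ℂ)‖ := norm_sub_le _ _
      _ ≤ ‖T‖ + S := by
          rw [Complex.norm_real, Real.norm_eq_abs]
          have h00 : ((0:ℝ),(0:ℝ)) ∈ Bset (1/2) := by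
            simp [Bset, supNorm]
          have := hSb _ h00
          linarith
  -- uniform continuity in lattice form
  have hUC' : ∀ (x y x' : ℤ), x ∈ s → y ∈ s → x' ∈ s → |x - x'| ≤ (l:ℤ) →
      ‖((f ((x:ℝ)/m, (y:ℝ)/m) : ℝ):ℂ) - ((f ((x':ℝ)/m, (y:ℝ)/m):ℝ):ℂ)‖ ≤ ε/2 := by
    intro x y x' hx hy hx' hxx
    rw [← Complex.ofReal_sub, Complex.norm_real, Real.norm_eq_abs]
    apply hUC _ (hmemB x hx y hy) _ (hmemB x' hx' y hy)
    have h1 : |(x:ℝ) - (x':ℝ)| ≤ (l:ℝ) := by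
      have h2 : ((|x - x'| : ℤ) : ℝ) ≤ ((l:ℤ):ℝ) := by exact_mod_cast hxx
      rw [Int.cast_abs] at h2
      push_cast at h2 ⊢
      linarith
    have h2 : dist ((x:ℝ)/m) ((x':ℝ)/m) < δ := by
      rw [Real.dist_eq, div_sub_div_same, abs_div, abs_of_pos hm0, div_lt_iff₀ hm0]
      linarith
    rw [Prod.dist_eq]
    apply max_lt h2
    simp only [dist_self]
    exact hδ0
  have hUC2 : ∀ (x y x' : ℤ), x ∈ s → y ∈ s → x' ∈ s → |x - x'| ≤ (l:ℤ) →
      ‖((f ((y:ℝ)/m, (x:ℝ)/m) : ℝ):ℂ) - ((f ((y:ℝ)/m, (x':ℝ)/m):ℝ):ℂ)‖ ≤ ε/2 := by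
    intro x y x' hx hy hx' hxx
    rw [← Complex.ofReal_sub, Complex.norm_real, Real.norm_eq_abs]
    apply hUC _ (hmemB y hy x hx) _ (hmemB y hy x' hx')
    have h1 : |(x:ℝ) - (x':ℝ)| ≤ (l:ℝ) := by
      have h2 : ((|x - x'| : ℤ) : ℝ) ≤ ((l:ℤ):ℝ) := by exact_mod_cast hxx
      rw [Int.cast_abs] at h2
      push_cast at h2 ⊢
      linarith
    have h2 : dist ((x:ℝ)/m) ((x':ℝ)/m) < δ := by
      rw [Real.dist_eq, div_sub_div_same, abs_div, abs_of_pos hm0, div_lt_iff₀ hm0]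
      linarith
    rw [Prod.dist_eq]
    apply max_lt ?_ h2
    simp only [dist_self]
    exact hδ0
  -- bound on |T|
  have habsT : ‖T‖ ≤ (n:ℝ) * ((N:ℝ) * (π*(m:ℝ)/A) * S + (ε/2) * (n:ℝ)) := by
    have hsupd : A/(m:ℝ) < |θ.1| ∨ A/(m:ℝ) < |θ.2| := lt_max_iff.1 hθA
    have hθ1π : |θ.1| ≤ π := le_trans (le_max_left _ _) hθπ
    have hθ2π : |θ.2| ≤ π := le_trans (le_max_right _ _) hθπ
    have hCbound : ∀ t : ℝ, A/(m:ℝ) < |t| → |t| ≤ π →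
        2 / ‖1 - Complex.exp (Complex.I * t)‖ ≤ π*(m:ℝ)/A := by
      intro t ht htπ
      have ht0 : t ≠ 0 := by
        intro h
        rw [h, abs_zero] at ht
        have : 0 < A/(m:ℝ) := by positivity
        linarith
      have h1 := abs_one_sub_exp ht0 htπ
      have h2 : 0 < |t| := abs_pos.2 ht0
      have h3 : 0 < 2*|t|/π := by positivity
      have h4 : 2 / ‖1 - Complex.exp (Complex.I * t)‖ ≤ 2 / (2*|t|/π) :=
        div_le_div_of_nonneg_left (by norm_num) h3 h1
      have h5 : 2 / (2*|t|/π) = π/|t| := by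
        rw [div_div_eq_mul_div, eq_div_iff (ne_of_gt h2)]
        field_simp
      have h6 : π/|t| ≤ π/(A/(m:ℝ)) :=
        div_le_div_of_nonneg_left (le_of_lt hπ) (by positivity) (le_of_lt ht)
      have h7 : π/(A/(m:ℝ)) = π*(m:ℝ)/A := by
        field_simp
      linarith
    rcases hsupd with hj | hj
    · have hθ0 : θ.1 ≠ 0 := by
        intro h
        rw [h, abs_zero] at hj
        have : 0 < A/(m:ℝ) := by positivity
        linarith
      have hzne : z1 ≠ 1 := exp_I_ne_one hθ0 hθ1π
      have hTrow : T = ∑ p ∈ s ×ˢ s,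
          ((f ((p.1:ℝ)/m,(p.2:ℝ)/m):ℝ):ℂ) * z1 ^ p.1 * z2 ^ p.2 := by
        rw [hT, hLam]
        apply Finset.sum_congr rfl
        intro p _
        rw [hzw p]
        ring
      rw [hTrow, hs]
      refine le_trans (rect_bound z1 z2 hzne (abs_exp_I θ.1) (abs_exp_I θ.2)
        (fun x y => ((f ((x:ℝ)/m,(y:ℝ)/m):ℝ):ℂ)) S (ε/2) a n l N hn0 hl0 hNl ?_ ?_) ?_
      · intro x hx y hy
        rw [Complex.norm_real, Real.norm_eq_abs]
        exact hSb _ (hmemB x (by rw [hs]; exact hx) y (by rw [hs]; exact hy))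
      · intro y hy x hx x' hx' h
        exact hUC' x y x' (by rw [hs]; exact hx) (by rw [hs]; exact hy) (by rw [hs]; exact hx') h
      · apply mul_le_mul_of_nonneg_left ?_ (by positivity)
        apply add_le_add_left
        apply mul_le_mul_of_nonneg_right ?_ hS0
        exact mul_le_mul_of_nonneg_left (hCbound θ.1 hj hθ1π) (by positivity)
    · have hθ0 : θ.2 ≠ 0 := by
        intro h
        rw [h, abs_zero] at hj
        have : 0 < A/(m:ℝ) := by positivity
        linarith
      have hzne : z2 ≠ 1 := exp_I_ne_one hθ0 hθ2π
      have hTrow : T = ∑ p ∈ s ×ˢ s,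
          ((f ((p.2:ℝ)/m,(p.1:ℝ)/m):ℝ):ℂ) * z2 ^ p.1 * z1 ^ p.2 := by
        rw [hT, hLam]
        rw [Finset.sum_product, Finset.sum_product, Finset.sum_comm]
        apply Finset.sum_congr rfl
        intro y _
        apply Finset.sum_congr rfl
        intro x _
        rw [hzw (x,y)]
        ring
      rw [hTrow, hs]
      refine le_trans (rect_bound z2 z1 hzne (abs_exp_I θ.2) (abs_exp_I θ.1)
        (fun x y => ((f ((y:ℝ)/m,(x:ℝ)/m):ℝ):ℂ)) S (ε/2) a n l N hn0 hl0 hNl ?_ ?_) ?_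
      · intro x hx y hy
        rw [Complex.norm_real, Real.norm_eq_abs]
        exact hSb _ (hmemB y (by rw [hs]; exact hy) x (by rw [hs]; exact hx))
      · intro y hy x hx x' hx' h
        exact hUC2 x y x' (by rw [hs]; exact hx) (by rw [hs]; exact hy) (by rw [hs]; exact hx') h
      · apply mul_le_mul_of_nonneg_left ?_ (by positivity)
        apply add_le_add_left
        apply mul_le_mul_of_nonneg_right ?_ hS0
        exact mul_le_mul_of_nonneg_left (hCbound θ.2 hj hθ2π) (by positivity)
  -- final numerics
  refine le_trans hphi_le ?_
  rw [mul_assoc]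
  apply mul_le_mul_of_nonneg_left ?_ hcm
  rw [inv_mul_le_iff₀ hKpos]
  have hN0 : (0:ℝ) ≤ (N:ℝ) := Nat.cast_nonneg N
  have hAcalc : (9/δ)*(π*(m:ℝ)/A) = ε*(m:ℝ) := by
    rw [hA]
    field_simp
  have hTb : ‖T‖ ≤ (n:ℝ)*(ε*(m:ℝ)*S + (ε/2)*(n:ℝ)) := by
    refine le_trans habsT ?_
    rw [← hAcalc]
    apply mul_le_mul_of_nonneg_left ?_ (by positivity)
    apply add_le_add_left
    apply mul_le_mul_of_nonneg_right ?_ hS0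
    apply mul_le_mul_of_nonneg_right hNr (by positivity)
  have hmK' : 1 ≤ ((m:ℝ)^2 + 2*(m:ℝ))*ε := by
    have h1 : 1 ≤ (m+1)^2 := Nat.one_le_iff_ne_zero.2 (by positivity)
    have h2 : ((((m+1)^2 - 1 : ℕ)) : ℝ) = (m:ℝ)^2 + 2*(m:ℝ) := by
      push_cast [Nat.cast_sub h1]
      ring
    rw [h2] at hmK
    exact hmK
  have hnr : (n:ℝ) = (m:ℝ) + 1 := by push_cast [hn]; ring
  rw [hnr] at hTb
  rw [hKr]
  exact final_numeric (‖T‖) (m:ℝ) S ε hε hS0 hm2 hTb hmK'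

lemma evenAtTop_neBot : evenAtTop.NeBot := by
  have h : Filter.map (fun n => 2*n) Filter.atTop ≤ evenAtTop := by
    refine le_inf ?_ ?_
    · exact Filter.tendsto_atTop_mono (fun n => by simp only [id_eq]; omega) Filter.tendsto_id
    · rw [Filter.le_principal_iff]
      exact Filter.mem_map.2 (Filter.Eventually.of_forall (fun n => ⟨n, two_mul n⟩))
  exact Filter.neBot_of_le h


/-- With `c̄ = sup_M c_M` (over even positive `M`), for every `ε > 0` there exists a
finite constant `A` such that
`limsup_{M→∞} sup_{θ ∈ B(π)\B(A/M)} φ_M(θ) ≤ ε c̄ (1 + 20‖f‖_∞)`. -/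
theorem prop_suff_P3 (f : ℝ × ℝ → ℝ) (c : ℕ → ℝ)
    (hfpos : ∀ x ∈ Bset (1 / 2), 0 < f x)
    (hfcont : ContinuousOn f (Bset (1 / 2)))
    (hfsym1 : ∀ x ∈ Bset (1 / 2), f (x.1, x.2) = f (x.2, x.1))
    (hfsym2 : ∀ x ∈ Bset (1 / 2), f (x.1, x.2) = f (-x.1, x.2))
    (hcpos : ∀ m : ℕ, Even m → 0 < m → 0 < c m)
    (hcsum : ∀ m : ℕ, Even m → 0 < m → ∑ x ∈ (Lam m).erase 0, qMf f c m x = 1)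
    (cbar : ℝ) (hcbar : IsLUB {y : ℝ | ∃ m : ℕ, Even m ∧ 0 < m ∧ y = c m} cbar) :
    ∀ ε > (0 : ℝ), ∃ A : ℝ,
      Filter.limsup
          (fun m : ℕ => sSup (phiOf m (qMf f c m) '' (Bset π \ Bset (A / m))))
          evenAtTop
        ≤ ε * cbar * (1 + 20 * sSup ((fun x => |f x|) '' Bset (1 / 2))) := by
  intro ε hε
  have hπ := Real.pi_pos
  have hBeq : Bset (1/2 : ℝ) = Set.Icc ((-(1/2:ℝ), -(1/2:ℝ))) ((1/2:ℝ), (1/2:ℝ)) := by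
    ext θ
    simp only [Bset, supNorm, Set.mem_setOf_eq, Set.mem_Icc, max_le_iff, Prod.le_def, abs_le]
    tauto
  have hcomp : IsCompact (Bset (1/2:ℝ)) := hBeq ▸ isCompact_Icc
  set S := sSup ((fun x => |f x|) '' Bset (1/2:ℝ)) with hSdef
  have hbdd : BddAbove ((fun x => |f x|) '' Bset (1/2:ℝ)) :=
    (hcomp.image_of_continuousOn (continuous_abs.comp_continuousOn hfcont)).bddAbove
  have hSb : ∀ x ∈ Bset (1/2:ℝ), |f x| ≤ S := fun x hx => le_csSup hbdd ⟨x, hx, rfl⟩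
  have h00B : ((0:ℝ),(0:ℝ)) ∈ Bset (1/2:ℝ) := by
    simp only [Bset, supNorm, Set.mem_setOf_eq]
    norm_num
  have hS0 : 0 ≤ S := le_trans (abs_nonneg _) (hSb _ h00B)
  have hUCfull := hcomp.uniformContinuousOn_of_continuous hfcont
  rw [Metric.uniformContinuousOn_iff] at hUCfull
  obtain ⟨η, hη0, hUCη⟩ := hUCfull (ε/2) (by linarith)
  set δ := min η 1 with hδdef
  have hδ0 : 0 < δ := lt_min hη0 one_pos
  have hδ1 : δ ≤ 1 := min_le_right _ _
  have hUC : ∀ u ∈ Bset (1/2:ℝ), ∀ v ∈ Bset (1/2:ℝ), dist u v < δ → |f u - f v| ≤ ε/2 := by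
    intro u hu v hv hd
    have h := hUCη u hu v hv (lt_of_lt_of_le hd (min_le_left _ _))
    rw [Real.dist_eq] at h
    linarith
  refine ⟨9*π/(δ*ε), ?_⟩
  have hc2 : c 2 ≤ cbar := hcbar.1 ⟨2, ⟨1, by norm_num⟩, by norm_num, rfl⟩
  have hcbar0 : 0 < cbar := lt_of_lt_of_le (hcpos 2 ⟨1, by norm_num⟩ (by norm_num)) hc2
  have hcb : ∀ m : ℕ, Even m → 0 < m → c m ≤ cbar := fun m h1 h2 => hcbar.1 ⟨m, h1, h2, rfl⟩
  have hB0 : 0 ≤ ε * cbar * (1 + 20 * S) :=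
    mul_nonneg (mul_nonneg hε.le hcbar0.le) (by linarith)
  set M0 : ℕ := ⌈4/δ⌉₊ + ⌈1/ε⌉₊ + 4 with hM0
  have hev : ∀ᶠ m in evenAtTop,
      sSup (phiOf m (qMf f c m) '' (Bset π \ Bset (9*π/(δ*ε) / m))) ≤ ε * cbar * (1 + 20*S) ∧
      -(ε * cbar * (1 + 20*S)) - 1 ≤
        sSup (phiOf m (qMf f c m) '' (Bset π \ Bset (9*π/(δ*ε) / m))) := by
    rw [evenAtTop, Filter.eventually_inf_principal]
    filter_upwards [Filter.eventually_ge_atTop M0] with m hm hmeven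
    have hm0 : 0 < m := by omega
    have hm4 : 4 ≤ δ * m := by
      have h1 : (4/δ : ℝ) ≤ (⌈4/δ⌉₊ : ℝ) := Nat.le_ceil _
      have h2 : ((⌈4/δ⌉₊:ℕ) : ℝ) ≤ (m:ℝ) := by
        have : ⌈4/δ⌉₊ ≤ m := by omega
        exact_mod_cast this
      have h3 : 4/δ ≤ (m:ℝ) := le_trans h1 h2
      rw [div_le_iff₀ hδ0] at h3
      linarith [mul_comm δ (m:ℝ)]
    have hmK : 1 ≤ (((m+1)^2 - 1 : ℕ):ℝ) * ε := by
      have he1 : (m+1)^2 = m*m + 2*m + 1 := by ring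
      have h2 : ⌈1/ε⌉₊ ≤ (m+1)^2 - 1 := by omega
      have h3 : (1/ε : ℝ) ≤ (((m+1)^2 - 1 : ℕ):ℝ) :=
        le_trans (Nat.le_ceil _) (by exact_mod_cast h2)
      rw [div_le_iff₀ hε] at h3
      linarith
    have key : ∀ θ ∈ Bset π \ Bset (9*π/(δ*ε) / m),
        |phiOf m (qMf f c m) θ| ≤ ε * cbar * (1 + 20*S) := by
      intro θ hθ
      obtain ⟨hθπ, hθA⟩ := hθ
      have hest := main_est f c S ε δ hε hδ0 hδ1 hS0 hSb hUC m hmeven hm4 hmK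
        (hcpos m hmeven hm0).le θ hθπ (not_le.1 hθA)
      calc |phiOf m (qMf f c m) θ| ≤ c m * (ε*(1+20*S)) := hest
        _ ≤ cbar * (ε*(1+20*S)) :=
            mul_le_mul_of_nonneg_right (hcb m hmeven hm0)
              (mul_nonneg hε.le (by linarith))
        _ = ε * cbar * (1+20*S) := by ring
    constructor
    · apply Real.sSup_le ?_ hB0
      rintro v ⟨θ, hθ, rfl⟩
      exact (abs_le.1 (key θ hθ)).2
    · rcases Set.eq_empty_or_nonempty
        (phiOf m (qMf f c m) '' (Bset π \ Bset (9*π/(δ*ε) / m))) with he | hne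
      · rw [he, Real.sSup_empty]
        linarith
      · obtain ⟨v, hv⟩ := hne
        have hba : BddAbove (phiOf m (qMf f c m) '' (Bset π \ Bset (9*π/(δ*ε) / m))) := by
          refine ⟨ε * cbar * (1 + 20*S), ?_⟩
          rintro w ⟨θ, hθ, rfl⟩
          exact (abs_le.1 (key θ hθ)).2
        have h1 := le_csSup hba hv
        obtain ⟨θ, hθ, rfl⟩ := hv
        have h2 := (abs_le.1 (key θ hθ)).1
        linarith
  haveI := evenAtTop_neBot
  exact Filter.limsup_le_of_le
    (Filter.isCoboundedUnder_le_of_eventually_le _ (hev.mono fun m h => h.2))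
    (hev.mono fun m h => h.1)
end
end

section
/- Let f be a positive continuous function on B(1/2) = {x ∈ ℝ² : ‖x‖_∞ ≤ 1/2} with f(x₁,x₂) = f(x₂,x₁) = f(−x₁,x₂), and for each even positive integer M let q_M(x) = c_M f(x/M) u_M(x) with c_M > 0 chosen so that ∑_x q_M(x) = 1, and let φ_M(θ) = ∑_{x ∈ ℤ²} e^{iθ·x} q_M(x). Then for all real numbers 0 < δ < A < ∞ there exists ζ > 0 such that limsup_{M→∞} sup_{θ ∈ B(A/M) \ B(δ/M)} φ_M(θ) ≤ 1 − ζ. -/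
open Filter MeasureTheory Real Finset
open scoped BigOperators

noncomputable section

private lemma IccSucc' (B : ℕ) : Finset.Icc (-((B:ℤ)+1)) ((B:ℤ)+1) =
    insert (-((B:ℤ)+1)) (insert ((B:ℤ)+1) (Finset.Icc (-(B:ℤ)) (B:ℤ))) := by
  ext x; simp [Finset.mem_Icc, Finset.mem_insert]; omega

private lemma sumQ' (B : ℕ) : ∑ j ∈ Finset.Icc (-(B:ℤ)) (B:ℤ), ((j:ℝ))^2
    = B*(B+1)*(2*B+1)/3 := by
  induction B with
  | zero => simp
  | succ B ih =>
    have h1 : ((B:ℤ)+1) ∉ Finset.Icc (-(B:ℤ)) (B:ℤ) := by simp [Finset.mem_Icc]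
    have h2 : (-((B:ℤ)+1)) ∉ insert ((B:ℤ)+1) (Finset.Icc (-(B:ℤ)) (B:ℤ)) := by
      simp [Finset.mem_Icc, Finset.mem_insert]; omega
    push_cast
    rw [IccSucc', Finset.sum_insert h2, Finset.sum_insert h1, ih]
    push_cast; ring

private lemma sum0' (B : ℕ) : ∑ j ∈ Finset.Icc (-(B:ℤ)) (B:ℤ), ((j:ℝ)) = 0 := by
  induction B with
  | zero => simp
  | succ B ih =>
    have h1 : ((B:ℤ)+1) ∉ Finset.Icc (-(B:ℤ)) (B:ℤ) := by simp [Finset.mem_Icc]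
    have h2 : (-((B:ℤ)+1)) ∉ insert ((B:ℤ)+1) (Finset.Icc (-(B:ℤ)) (B:ℤ)) := by
      simp [Finset.mem_Icc, Finset.mem_insert]; omega
    push_cast
    rw [IccSucc', Finset.sum_insert h2, Finset.sum_insert h1, ih]
    push_cast; ring

private lemma cardIcc' (B : ℕ) : (Finset.Icc (-(B:ℤ)) (B:ℤ)).card = 2*B+1 := by
  rw [Int.card_Icc]; omega

private lemma cosLB' (t : ℝ) (ht : |t| ≤ 1/2) : t^2/4 ≤ 1 - Real.cos t := by
  have hb := Real.cos_bound (le_trans ht (by norm_num))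
  have h4 : |t|^4 = (t^2)^2 := by
    rw [pow_abs] at *; rw [abs_of_nonneg (by positivity : (0:ℝ) ≤ t^4)]; ring
  have ht2 : t^2 ≤ 1/4 := by nlinarith [abs_nonneg t, sq_abs t]
  have := abs_le.1 hb
  nlinarith [sq_nonneg t]

private lemma innerB' (a c : ℝ) (B : ℕ) :
    a^2 * (∑ j ∈ Finset.Icc (-(B:ℤ)) (B:ℤ), ((j:ℝ))^2)
      ≤ ∑ j ∈ Finset.Icc (-(B:ℤ)) (B:ℤ), (a*(j:ℝ) + c)^2 := by
  have h : ∑ j ∈ Finset.Icc (-(B:ℤ)) (B:ℤ), (a*(j:ℝ) + c)^2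
      = ∑ j ∈ Finset.Icc (-(B:ℤ)) (B:ℤ),
        (a^2*((j:ℝ))^2 + (2*a*c)*(j:ℝ) + c^2) := by
    exact Finset.sum_congr rfl fun x _ => by ring
  rw [h, Finset.sum_add_distrib, Finset.sum_add_distrib, ← Finset.mul_sum,
    ← Finset.mul_sum, sum0', Finset.sum_const, nsmul_eq_mul]
  have : (0:ℝ) ≤ ((Finset.Icc (-(B:ℤ)) (B:ℤ)).card : ℝ) * c^2 := by positivity
  nlinarith

private lemma phi_eq' (m : ℕ) (qq : ℤ × ℤ → ℝ) (θ : ℝ × ℝ) :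
    phiOf m qq θ = ∑ x ∈ Lam m, Real.cos (dotP θ x) * qq x := by
  unfold phiOf
  rw [Complex.re_sum]
  refine Finset.sum_congr rfl fun x _ => ?_
  simp [cexp, Complex.exp_re, Complex.mul_re, Complex.mul_im, Complex.exp_im]

private lemma memLam' (m : ℕ) (x : ℤ × ℤ) (hx : x ∈ Lam m) :
    |(x.1:ℝ)| ≤ m/2 ∧ |(x.2:ℝ)| ≤ m/2 := by
  simp only [Lam, Finset.mem_product, Finset.mem_Icc] at hx
  constructor <;> rw [abs_le] <;> constructor
  · calc (-(m/2):ℝ) ≤ (⌈-(m:ℝ)/2⌉:ℝ) := by rw [neg_div]; exact Int.le_ceil _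
      _ ≤ x.1 := by exact_mod_cast hx.1.1
  · calc ((x.1:ℝ)) ≤ (⌊(m:ℝ)/2⌋:ℝ) := by exact_mod_cast hx.1.2
      _ ≤ m/2 := Int.floor_le _
  · calc (-(m/2):ℝ) ≤ (⌈-(m:ℝ)/2⌉:ℝ) := by rw [neg_div]; exact Int.le_ceil _
      _ ≤ x.2 := by exact_mod_cast hx.2.1
  · calc ((x.2:ℝ)) ≤ (⌊(m:ℝ)/2⌋:ℝ) := by exact_mod_cast hx.2.2
      _ ≤ m/2 := Int.floor_le _

private lemma zero_mem_Lam' (m : ℕ) : (0 : ℤ × ℤ) ∈ Lam m := by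
  simp only [Lam, Finset.mem_product, Finset.mem_Icc, Prod.fst_zero, Prod.snd_zero]
  have h1 : (0:ℤ) ≤ ⌊(m:ℝ)/2⌋ := Int.le_floor.2 (by push_cast; positivity)
  have h2 : ⌈-(m:ℝ)/2⌉ ≤ 0 := by
    apply Int.ceil_le.2; push_cast
    have : (0:ℝ) ≤ (m:ℝ) := Nat.cast_nonneg m
    linarith
  tauto

private lemma subLam' (m B : ℕ) (hB : (B:ℝ) ≤ m/2) :
    Finset.Icc (-(B:ℤ)) (B:ℤ) ×ˢ Finset.Icc (-(B:ℤ)) (B:ℤ) ⊆ Lam m := by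
  intro x hx
  simp only [Finset.mem_product, Finset.mem_Icc] at hx ⊢
  unfold Lam
  simp only [Finset.mem_product, Finset.mem_Icc]
  have hlow : ⌈-(m:ℝ)/2⌉ ≤ -(B:ℤ) := by
    apply Int.ceil_le.2; push_cast; linarith
  have hhigh : (B:ℤ) ≤ ⌊(m:ℝ)/2⌋ := by
    apply Int.le_floor.2; push_cast; linarith
  omega

private lemma one_zero_mem' (m : ℕ) (hm : 2 ≤ m) : ((1,0) : ℤ × ℤ) ∈ (Lam m).erase 0 := by
  refine Finset.mem_erase.2 ⟨by simp, ?_⟩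
  have hm' : (2:ℝ) ≤ (m:ℝ) := by exact_mod_cast hm
  have := subLam' m 1 (by push_cast; linarith)
  apply this
  simp

private lemma cardLam' (m : ℕ) : (((Lam m).erase 0).card : ℝ) ≤ (m+1)^2 := by
  have h1 : ((Lam m).erase 0).card ≤ (Lam m).card := Finset.card_erase_le
  have h2 : (Lam m).card = (Finset.Icc ⌈-(m:ℝ)/2⌉ ⌊(m:ℝ)/2⌋).card ^2 := by
    unfold Lam; rw [Finset.card_product]; ring
  have h3 : (Finset.Icc ⌈-(m:ℝ)/2⌉ ⌊(m:ℝ)/2⌋).card ≤ m + 1 := by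
    rw [Int.card_Icc]
    have ha : (-(m:ℝ)/2) ≤ (⌈-(m:ℝ)/2⌉:ℝ) := Int.le_ceil _
    have hb : ((⌊(m:ℝ)/2⌋:ℝ)) ≤ (m:ℝ)/2 := Int.floor_le _
    have : ⌊(m:ℝ)/2⌋ - ⌈-(m:ℝ)/2⌉ ≤ (m:ℤ) := by
      have : ((⌊(m:ℝ)/2⌋ - ⌈-(m:ℝ)/2⌉ : ℤ):ℝ) ≤ ((m:ℤ):ℝ) := by push_cast; linarith
      exact_mod_cast this
    omega
  calc (((Lam m).erase 0).card : ℝ) ≤ ((Lam m).card : ℝ) := by exact_mod_cast h1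
    _ = ((Finset.Icc ⌈-(m:ℝ)/2⌉ ⌊(m:ℝ)/2⌋).card:ℝ)^2 := by exact_mod_cast h2
    _ ≤ ((m:ℝ)+1)^2 := by
        apply pow_le_pow_left₀ (by positivity)
        exact_mod_cast h3

private lemma sum_dot_sq' (θ : ℝ × ℝ) (B : ℕ) (d : ℝ) (hd : 0 ≤ d)
    (h : d ≤ |θ.1| ∨ d ≤ |θ.2|) :
    d^2 * (((Finset.Icc (-(B:ℤ)) (B:ℤ)).card : ℝ) * ((B:ℝ)*((B:ℝ)+1)*(2*(B:ℝ)+1)/3)) ≤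
      ∑ x ∈ Finset.Icc (-(B:ℤ)) (B:ℤ) ×ˢ Finset.Icc (-(B:ℤ)) (B:ℤ), (dotP θ x)^2 := by
  set I := Finset.Icc (-(B:ℤ)) (B:ℤ) with hI
  set Q : ℝ := (B:ℝ)*((B:ℝ)+1)*(2*(B:ℝ)+1)/3 with hQdef
  have hQ : ∑ j ∈ I, ((j:ℝ))^2 = Q := sumQ' B
  have hQ0 : 0 ≤ Q := by positivity
  rcases h with h1 | h1
  · have hd2 : d^2 ≤ θ.1^2 := by
      rw [← sq_abs θ.1]; exact pow_le_pow_left₀ hd h1 2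
    rw [Finset.sum_product_right]
    have key : ∀ k ∈ I, θ.1^2 * Q ≤ ∑ j ∈ I, (dotP θ (j, k))^2 := by
      intro k _
      have h2 := innerB' θ.1 (θ.2*(k:ℝ)) B
      rw [hQ] at h2
      refine h2.trans_eq (Finset.sum_congr rfl fun j _ => ?_)
      simp [dotP]
    calc d^2 * ((I.card:ℝ) * Q) ≤ θ.1^2 * ((I.card:ℝ) * Q) :=
          mul_le_mul_of_nonneg_right hd2 (by positivity)
      _ = ∑ _k ∈ I, θ.1^2 * Q := by rw [Finset.sum_const, nsmul_eq_mul]; ring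
      _ ≤ _ := Finset.sum_le_sum key
  · have hd2 : d^2 ≤ θ.2^2 := by
      rw [← sq_abs θ.2]; exact pow_le_pow_left₀ hd h1 2
    rw [Finset.sum_product]
    have key : ∀ j ∈ I, θ.2^2 * Q ≤ ∑ k ∈ I, (dotP θ (j, k))^2 := by
      intro j _
      have h2 := innerB' θ.2 (θ.1*(j:ℝ)) B
      rw [hQ] at h2
      refine h2.trans_eq (Finset.sum_congr rfl fun k _ => ?_)
      simp [dotP]; ring
    calc d^2 * ((I.card:ℝ) * Q) ≤ θ.2^2 * ((I.card:ℝ) * Q) :=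
          mul_le_mul_of_nonneg_right hd2 (by positivity)
      _ = ∑ _j ∈ I, θ.2^2 * Q := by rw [Finset.sum_const, nsmul_eq_mul]; ring
      _ ≤ _ := Finset.sum_le_sum key

private lemma numy' (κ δ r M n b : ℝ) (hκ : 0 < κ) (hδ : 0 < δ) (hr : 0 < r) (hM : 0 < M)
    (hn : 0 < n) (hn4 : n ≤ 4*M^2) (hb : r*M ≤ 2*b) (hb0 : 0 ≤ b) :
    κ*δ^2*r^4/192 ≤ (κ/n) * (((δ/M)^2 * ((2*b+1) * (b*(b+1)*(2*b+1)/3)))/4) := by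
  have h0 : (r*M)^4 ≤ (2*b)^4 := pow_le_pow_left₀ (by positivity) hb 4
  have h1 : (r*M)^4 ≤ 4*((2*b+1)^2*(b*(b+1))) := by nlinarith [sq_nonneg b, hb0]
  have heq : (κ/n) * (((δ/M)^2 * ((2*b+1) * (b*(b+1)*(2*b+1)/3)))/4)
      = κ * δ^2 * ((2*b+1)^2*(b*(b+1))) / (12 * (n * M^2)) := by
    field_simp; ring
  rw [heq, div_le_div_iff₀ (by norm_num) (by positivity)]
  nlinarith [mul_le_mul_of_nonneg_left h1 (by positivity : (0:ℝ) ≤ 48*κ*δ^2),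
    mul_le_mul_of_nonneg_left hn4 (by positivity : (0:ℝ) ≤ 12*κ*δ^2*r^4)]
set_option maxHeartbeats 3200000 in
/-- Property (P2) for the distributions `q_M(x) = c_M f(x/M) u_M(x)`:
for all `0 < δ < A < ∞` there exists `ζ > 0` with
`limsup_{M→∞} sup_{θ ∈ B(A/M)\B(δ/M)} φ_M(θ) ≤ 1 − ζ`. -/
theorem prop_suff_P2 (f : ℝ × ℝ → ℝ) (c : ℕ → ℝ)
    (hfpos : ∀ x ∈ Bset (1 / 2), 0 < f x)
    (hfcont : ContinuousOn f (Bset (1 / 2)))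
    (hfsym1 : ∀ x ∈ Bset (1 / 2), f (x.1, x.2) = f (x.2, x.1))
    (hfsym2 : ∀ x ∈ Bset (1 / 2), f (x.1, x.2) = f (-x.1, x.2))
    (hcpos : ∀ m : ℕ, Even m → 0 < m → 0 < c m)
    (hcsum : ∀ m : ℕ, Even m → 0 < m → ∑ x ∈ (Lam m).erase 0, qMf f c m x = 1) :
    ∀ δ A : ℝ, 0 < δ → δ < A →
      ∃ ζ > (0 : ℝ),
        Filter.limsup
            (fun m : ℕ => sSup (phiOf m (qMf f c m) '' (Bset (A / m) \ Bset (δ / m))))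
            evenAtTop
          ≤ 1 - ζ := by
  intro δ A hδ hδA
  have hA : 0 < A := hδ.trans hδA
  -- compactness of B(1/2) and extrema of f
  have hKeq : Bset (1/2) = Set.Icc ((-(1/2) : ℝ), (-(1/2) : ℝ)) (((1/2):ℝ), ((1/2):ℝ)) := by
    ext θ
    simp only [Bset, supNorm, Set.mem_setOf_eq, Set.mem_Icc, Prod.le_def, abs_le, max_le_iff]
    tauto
  have hKcomp : IsCompact (Bset (1/2)) := hKeq ▸ isCompact_Icc
  have hKne : (Bset (1/2)).Nonempty := ⟨0, by simp [Bset, supNorm]⟩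
  obtain ⟨xmin, hxminK, hmin⟩ := hKcomp.exists_isMinOn hKne hfcont
  obtain ⟨xmax, hxmaxK, hmax⟩ := hKcomp.exists_isMaxOn hKne hfcont
  have hfmin : 0 < f xmin := hfpos _ hxminK
  have hfmax : 0 < f xmax := hfpos _ hxmaxK
  set κ : ℝ := f xmin / f xmax with hκdef
  have hκ : 0 < κ := div_pos hfmin hfmax
  set r : ℝ := min (1/2) (1/(4*A)) with hrdef
  have hr : 0 < r := lt_min (by norm_num) (by positivity)
  have hr2 : r ≤ 1/2 := min_le_left _ _
  have hrA : r ≤ 1/(4*A) := min_le_right _ _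
  set ζ : ℝ := min (κ*δ^2*r^4/192) (1/2) with hζdef
  have hζ : 0 < ζ := lt_min (by positivity) (by norm_num)
  have hζhalf : ζ ≤ 1/2 := min_le_right _ _
  have hζ1 : ζ ≤ κ*δ^2*r^4/192 := min_le_left _ _
  refine ⟨ζ, hζ, ?_⟩
  -- evenAtTop is NeBot
  have hmaple : Filter.map (fun n => 2*n) Filter.atTop ≤ evenAtTop := by
    rw [evenAtTop]
    refine le_inf ?_ ?_
    · exact Filter.tendsto_atTop_mono (fun n => by simp only [id_eq]; omega) Filter.tendsto_id
    · rw [Filter.le_principal_iff]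
      exact Filter.mem_map.2 (Filter.univ_mem' fun n => (⟨n, by omega⟩ : Even (2*n)))
  haveI hNB : evenAtTop.NeBot := Filter.neBot_of_le hmaple
  set m₀ : ℕ := max 2 ⌈2/r⌉₊ with hm₀def
  -- the main eventual bound
  have hev : ∀ᶠ m in evenAtTop,
      (sSup (phiOf m (qMf f c m) '' (Bset (A / m) \ Bset (δ / m))) ≤ 1 - ζ ∧
       -1 ≤ sSup (phiOf m (qMf f c m) '' (Bset (A / m) \ Bset (δ / m)))) := by
    rw [evenAtTop, Filter.eventually_inf_principal]
    filter_upwards [Filter.eventually_ge_atTop m₀] with m hm hmev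
    have hmeven : Even m := hmev
    have hm2 : 2 ≤ m := le_trans (le_max_left _ _) hm
    have hm0 : 0 < m := by omega
    have hm0R : (0:ℝ) < m := by exact_mod_cast hm0
    have hm1R : (1:ℝ) ≤ m := by exact_mod_cast hm0
    have hrm : 2 ≤ r * m := by
      have h1 : (⌈2/r⌉₊ : ℕ) ≤ m := le_trans (le_max_right _ _) hm
      have h2 : (2/r : ℝ) ≤ m := le_trans (Nat.le_ceil _) (by exact_mod_cast h1)
      rw [div_le_iff₀ hr] at h2
      linarith [mul_comm r (m:ℝ)]
    set N : ℕ := ((Lam m).erase 0).card with hNdef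
    have hNpos : 0 < N := Finset.card_pos.2 ⟨_, one_zero_mem' m hm2⟩
    have hn : (0:ℝ) < N := by exact_mod_cast hNpos
    have hn4 : (N:ℝ) ≤ 4*(m:ℝ)^2 := le_trans (cardLam' m) (by nlinarith)
    have hmemK : ∀ x ∈ Lam m, (((x.1:ℝ))/m, ((x.2:ℝ))/m) ∈ Bset (1/2) := by
      intro x hx
      obtain ⟨h1, h2⟩ := memLam' m x hx
      simp only [Bset, supNorm, Set.mem_setOf_eq, max_le_iff]
      constructor <;> rw [abs_div, abs_of_pos hm0R, div_le_iff₀ hm0R] <;> linarith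
    have huu0 : ∀ x, 0 ≤ uunif m x := by
      intro x
      unfold uunif
      split
      · positivity
      · exact le_rfl
    have hq0 : ∀ x, 0 ≤ qMf f c m x := by
      intro x
      by_cases hx : x ∈ (Lam m).erase 0
      · exact mul_nonneg (mul_nonneg (hcpos m hmeven hm0).le
          (hfpos _ (hmemK x (Finset.mem_of_mem_erase hx))).le) (huu0 x)
      · simp [qMf, uunif, hx]
    have hcs := hcsum m hmeven hm0
    have hq00 : qMf f c m 0 = 0 := by
      unfold qMf uunif
      rw [if_neg (Finset.notMem_erase _ _)]; ring
    have hsumq : ∑ x ∈ Lam m, qMf f c m x = 1 := by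
      rw [← Finset.sum_erase_add _ _ (zero_mem_Lam' m), hcs, hq00]; ring
    have hsum_u : ∑ x ∈ (Lam m).erase 0, uunif m x = 1 := by
      have h : ∀ x ∈ (Lam m).erase 0, uunif m x = (N:ℝ)⁻¹ := fun x hx => by
        unfold uunif; rw [if_pos hx]
      rw [Finset.sum_congr rfl h, Finset.sum_const, nsmul_eq_mul]
      field_simp; rfl
    have hc : (f xmax)⁻¹ ≤ c m := by
      have hqeq : ∑ x ∈ (Lam m).erase 0, qMf f c m x
          = c m * ∑ x ∈ (Lam m).erase 0, f ((x.1:ℝ)/m, (x.2:ℝ)/m) * uunif m x := by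
        rw [Finset.mul_sum]; exact Finset.sum_congr rfl fun x _ => by unfold qMf; ring
      have hible : ∑ x ∈ (Lam m).erase 0, f ((x.1:ℝ)/m, (x.2:ℝ)/m) * uunif m x ≤ f xmax := by
        calc ∑ x ∈ (Lam m).erase 0, f ((x.1:ℝ)/m, (x.2:ℝ)/m) * uunif m x
            ≤ ∑ x ∈ (Lam m).erase 0, f xmax * uunif m x :=
              Finset.sum_le_sum fun x hx => mul_le_mul_of_nonneg_right
                (isMaxOn_iff.1 hmax _ (hmemK x (Finset.mem_of_mem_erase hx))) (huu0 x)
          _ = f xmax := by rw [← Finset.mul_sum, hsum_u, mul_one]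
      have h1 : 1 ≤ c m * f xmax := by
        calc (1:ℝ) = c m * (∑ x ∈ (Lam m).erase 0, f ((x.1:ℝ)/m, (x.2:ℝ)/m) * uunif m x) := by
              rw [← hqeq, hcs]
          _ ≤ c m * f xmax := mul_le_mul_of_nonneg_left hible (hcpos m hmeven hm0).le
      rw [inv_eq_one_div, div_le_iff₀ hfmax]
      linarith
    have hqlb : ∀ x ∈ (Lam m).erase 0, κ/(N:ℝ) ≤ qMf f c m x := by
      intro x hx
      have hxL := Finset.mem_of_mem_erase hx
      unfold qMf uunif
      rw [if_pos hx]
      have h1 : (f xmax)⁻¹ * f xmin ≤ c m * f ((x.1:ℝ)/m, (x.2:ℝ)/m) :=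
        mul_le_mul hc (isMinOn_iff.1 hmin _ (hmemK x hxL)) hfmin.le
          (le_trans (inv_nonneg.2 hfmax.le) hc)
      have h2 : κ/(N:ℝ) = ((f xmax)⁻¹ * f xmin) * (N:ℝ)⁻¹ := by
        rw [hκdef]; field_simp
      rw [h2, hNdef]
      exact mul_le_mul_of_nonneg_right h1 (inv_nonneg.2 hn.le)
    -- the pointwise bound on the annulus
    have hphi : ∀ θ ∈ Bset (A/(m:ℝ)) \ Bset (δ/(m:ℝ)),
        phiOf m (qMf f c m) θ ≤ 1 - ζ := by
      intro θ hθ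
      obtain ⟨hθA, hθδ⟩ := hθ
      have hab : |θ.1| ≤ A/m ∧ |θ.2| ≤ A/m := by
        simpa only [Bset, supNorm, Set.mem_setOf_eq, max_le_iff] using hθA
      have hd : δ/(m:ℝ) ≤ |θ.1| ∨ δ/(m:ℝ) ≤ |θ.2| := by
        simp only [Bset, supNorm, Set.mem_setOf_eq, max_le_iff, not_and_or, not_le] at hθδ
        exact hθδ.imp le_of_lt le_of_lt
      set B : ℕ := ⌊r*(m:ℝ)⌋₊ with hBdef
      have hB2 : (B:ℝ) ≤ r*m := Nat.floor_le (by positivity)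
      have hB3 : r*(m:ℝ) ≤ 2*B := by
        have := Nat.sub_one_lt_floor (r*(m:ℝ))
        linarith
      have hBm : (B:ℝ) ≤ (m:ℝ)/2 := le_trans hB2 (by nlinarith)
      have hSsub := subLam' m B hBm
      set S := Finset.Icc (-(B:ℤ)) (B:ℤ) ×ˢ Finset.Icc (-(B:ℤ)) (B:ℤ) with hSdef
      have hAr : A*r ≤ 1/4 := by
        calc A*r ≤ A*(1/(4*A)) := mul_le_mul_of_nonneg_left hrA hA.le
          _ = 1/4 := by field_simp
      have hdot : ∀ x ∈ S, |dotP θ x| ≤ 1/2 := by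
        intro x hx
        simp only [hSdef, Finset.mem_product, Finset.mem_Icc] at hx
        have h1 : |(x.1:ℝ)| ≤ B := by
          rw [abs_le]; exact ⟨by exact_mod_cast hx.1.1, by exact_mod_cast hx.1.2⟩
        have h2 : |(x.2:ℝ)| ≤ B := by
          rw [abs_le]; exact ⟨by exact_mod_cast hx.2.1, by exact_mod_cast hx.2.2⟩
        have hAm : (0:ℝ) ≤ A/m := by positivity
        have hterm : (A/m)*(B:ℝ) ≤ 1/4 := by
          rw [div_mul_eq_mul_div, div_le_iff₀ hm0R]
          nlinarith [mul_le_mul_of_nonneg_left hB2 hA.le]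
        calc |dotP θ x| ≤ |θ.1*x.1| + |θ.2*x.2| := abs_add_le _ _
          _ = |θ.1| * |(x.1:ℝ)| + |θ.2| * |(x.2:ℝ)| := by rw [abs_mul, abs_mul]
          _ ≤ (A/m)*B + (A/m)*B :=
              add_le_add (mul_le_mul hab.1 h1 (abs_nonneg _) hAm)
                (mul_le_mul hab.2 h2 (abs_nonneg _) hAm)
          _ ≤ 1/2 := by linarith
      have step1 : 1 - phiOf m (qMf f c m) θ
          = ∑ x ∈ Lam m, qMf f c m x * (1 - Real.cos (dotP θ x)) := by
        rw [phi_eq']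
        have h : ∑ x ∈ Lam m, qMf f c m x * (1 - Real.cos (dotP θ x))
            = (∑ x ∈ Lam m, qMf f c m x)
              - ∑ x ∈ Lam m, Real.cos (dotP θ x) * qMf f c m x := by
          rw [← Finset.sum_sub_distrib]
          exact Finset.sum_congr rfl fun x _ => by ring
        rw [h, hsumq]
      have step2 : ∑ x ∈ S, qMf f c m x * (1 - Real.cos (dotP θ x))
          ≤ ∑ x ∈ Lam m, qMf f c m x * (1 - Real.cos (dotP θ x)) :=
        Finset.sum_le_sum_of_subset_of_nonneg hSsub fun x _ _ =>
          mul_nonneg (hq0 x) (by nlinarith [Real.cos_le_one (dotP θ x)])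
      have step3 : ∑ x ∈ S, (κ/(N:ℝ)) * (1 - Real.cos (dotP θ x))
          ≤ ∑ x ∈ S, qMf f c m x * (1 - Real.cos (dotP θ x)) := by
        refine Finset.sum_le_sum fun x hx => ?_
        by_cases hx0 : x = 0
        · subst hx0; simp [dotP]
        · exact mul_le_mul_of_nonneg_right (hqlb x (Finset.mem_erase.2 ⟨hx0, hSsub hx⟩))
            (by nlinarith [Real.cos_le_one (dotP θ x)])
      have step4 : (κ/(N:ℝ)) * ((∑ x ∈ S, (dotP θ x)^2)/4)
          ≤ ∑ x ∈ S, (κ/(N:ℝ)) * (1 - Real.cos (dotP θ x)) := by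
        rw [← Finset.mul_sum]
        refine mul_le_mul_of_nonneg_left ?_ (by positivity)
        rw [Finset.sum_div]
        exact Finset.sum_le_sum fun x hx => cosLB' _ (hdot x hx)
      have step5 := sum_dot_sq' θ B (δ/(m:ℝ)) (by positivity) hd
      rw [cardIcc'] at step5
      push_cast at step5
      have hnum := numy' κ δ r (m:ℝ) (N:ℝ) (B:ℝ) hκ hδ hr hm0R hn hn4 hB3 (by positivity)
      have hfinal : κ*δ^2*r^4/192 ≤ 1 - phiOf m (qMf f c m) θ := by
        calc κ*δ^2*r^4/192
            ≤ (κ/(N:ℝ)) * (((δ/(m:ℝ))^2 *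
                ((2*(B:ℝ)+1) * ((B:ℝ)*((B:ℝ)+1)*(2*(B:ℝ)+1)/3)))/4) := hnum
          _ ≤ (κ/(N:ℝ)) * ((∑ x ∈ S, (dotP θ x)^2)/4) := by
              refine mul_le_mul_of_nonneg_left ?_ (by positivity)
              linarith [step5]
          _ ≤ ∑ x ∈ S, (κ/(N:ℝ)) * (1 - Real.cos (dotP θ x)) := step4
          _ ≤ ∑ x ∈ S, qMf f c m x * (1 - Real.cos (dotP θ x)) := step3
          _ ≤ ∑ x ∈ Lam m, qMf f c m x * (1 - Real.cos (dotP θ x)) := step2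
          _ = 1 - phiOf m (qMf f c m) θ := step1.symm
      linarith
    -- sSup bounds
    have hgub : ∀ y ∈ phiOf m (qMf f c m) '' (Bset (A/(m:ℝ)) \ Bset (δ/(m:ℝ))), y ≤ 1 - ζ := by
      rintro y ⟨θ, hθ, rfl⟩
      exact hphi θ hθ
    have hg1 : sSup (phiOf m (qMf f c m) '' (Bset (A/(m:ℝ)) \ Bset (δ/(m:ℝ)))) ≤ 1 - ζ :=
      Real.sSup_le hgub (by linarith)
    have hAmpos : (0:ℝ) < A/m := by positivity
    have hθ0mem : ((A/(m:ℝ), 0) : ℝ×ℝ) ∈ Bset (A/(m:ℝ)) \ Bset (δ/(m:ℝ)) := by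
      constructor
      · show supNorm (A/(m:ℝ), 0) ≤ A/(m:ℝ)
        simp [supNorm, abs_of_pos hAmpos, hAmpos.le]
      · intro hcon
        simp only [Bset, Set.mem_setOf_eq, supNorm, abs_zero, abs_of_pos hAmpos,
          max_le_iff] at hcon
        have hlt : δ/(m:ℝ) < A/(m:ℝ) := (div_lt_div_iff_of_pos_right hm0R).2 hδA
        linarith [hcon.1]
    have hφ0 : -1 ≤ phiOf m (qMf f c m) (A/(m:ℝ), 0) := by
      rw [phi_eq']
      have h1 : ∀ x ∈ Lam m,
          -qMf f c m x ≤ Real.cos (dotP (A/(m:ℝ),0) x) * qMf f c m x := fun x _ => by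
        nlinarith [Real.neg_one_le_cos (dotP (A/(m:ℝ),0) x), hq0 x]
      calc (-1:ℝ) = -∑ x ∈ Lam m, qMf f c m x := by rw [hsumq]
        _ = ∑ x ∈ Lam m, -qMf f c m x := by rw [← Finset.sum_neg_distrib]
        _ ≤ _ := Finset.sum_le_sum h1
    have hg2 : -1 ≤ sSup (phiOf m (qMf f c m) '' (Bset (A/(m:ℝ)) \ Bset (δ/(m:ℝ)))) := by
      have hbdd : BddAbove (phiOf m (qMf f c m) '' (Bset (A/(m:ℝ)) \ Bset (δ/(m:ℝ)))) :=
        ⟨1-ζ, fun y hy => hgub y hy⟩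
      have hle := le_csSup hbdd ⟨_, hθ0mem, rfl⟩
      linarith
    exact ⟨hg1, hg2⟩
  have hbd : Filter.IsBoundedUnder (· ≥ ·) evenAtTop
      (fun m : ℕ => sSup (phiOf m (qMf f c m) '' (Bset (A / m) \ Bset (δ / m)))) :=
    ⟨-1, Filter.eventually_map.2 (hev.mono fun m hm => hm.2)⟩
  exact Filter.limsup_le_of_le hbd.isCoboundedUnder_le (hev.mono fun m hm => hm.1)
end
end
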